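/- arXiv:1709.06130 — 6 statements merged into one kernel-verified Lean document; each statement's English description precedes it below -/
import Mathlib

section
/- For every integer k ≥ 1, there exists a k-edge-coloring of the complete graph on 4·2^k vertices that contains no rainbow triangle and no monochromatic copy of the cycle C_9. -/
/-- `c` contains a rainbow triangle: three distinct vertices whose three
connecting edges receive pairwise distinct colors. -/
def HasRainbowTriangle {V C : Type*} (c : V → V → C) : Prop :=
  ∃ a b d : V, a ≠ b ∧ a ≠ d ∧ b ≠ d ∧
    c a b ≠ c a d ∧ c a b ≠ c b d ∧ c a d ≠ c b d

/-- `c` contains a cycle on `m` vertices all of whose edges have color `col`. -/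
def HasMonoCycleIn {V C : Type*} (c : V → V → C) (m : ℕ) [NeZero m] (col : C) : Prop :=
  ∃ v : Fin m → V, Function.Injective v ∧ ∀ i : Fin m, c (v i) (v (i + 1)) = col

/-- `c` contains a monochromatic cycle on `m` vertices. -/
def HasMonoCycle {V C : Type*} (c : V → V → C) (m : ℕ) [NeZero m] : Prop :=
  ∃ col : C, HasMonoCycleIn c m col

def dcol (k x y : ℕ) : ℕ :=
  Nat.findGreatest (fun i => x / (4 * 2 ^ i) ≠ y / (4 * 2 ^ i)) (k - 1)

lemma fg_congr {P Q : ℕ → Prop} [DecidablePred P] [DecidablePred Q]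
    (h : ∀ i, P i ↔ Q i) : ∀ n, Nat.findGreatest P n = Nat.findGreatest Q n := by
  intro n
  induction n with
  | zero => rfl
  | succ m ih =>
    rw [Nat.findGreatest_succ, Nat.findGreatest_succ, ih]
    by_cases hq : Q (m + 1)
    · rw [if_pos ((h _).mpr hq), if_pos hq]
    · rw [if_neg (fun hp => hq ((h _).mp hp)), if_neg hq]

lemma dcol_le (k x y : ℕ) : dcol k x y ≤ k - 1 := Nat.findGreatest_le _

lemma dcol_symm (k x y : ℕ) : dcol k x y = dcol k y x :=
  fg_congr (fun i => ne_comm) _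

lemma dcol_max {k x y j : ℕ} (h1 : dcol k x y < j) (h2 : j ≤ k - 1) :
    x / (4 * 2 ^ j) = y / (4 * 2 ^ j) := by
  have := Nat.findGreatest_is_greatest (P := fun i => x / (4 * 2 ^ i) ≠ y / (4 * 2 ^ i))
    (n := k - 1) h1 h2
  simpa using this

lemma dcol_spec {k x y : ℕ} (h : dcol k x y ≠ 0) :
    x / (4 * 2 ^ dcol k x y) ≠ y / (4 * 2 ^ dcol k x y) :=
  Nat.findGreatest_of_ne_zero (P := fun i => x / (4 * 2 ^ i) ≠ y / (4 * 2 ^ i)) rfl h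

lemma dcol_ultra (k a b d : ℕ) : dcol k a b ≤ max (dcol k a d) (dcol k d b) := by
  by_contra hm
  push_neg at hm
  set m := dcol k a b with hmdef
  have hm0 : m ≠ 0 := by omega
  have hmk : m ≤ k - 1 := dcol_le k a b
  have h1 : a / (4 * 2 ^ m) = d / (4 * 2 ^ m) := dcol_max (by omega) hmk
  have h2 : d / (4 * 2 ^ m) = b / (4 * 2 ^ m) := dcol_max (by omega) hmk
  exact dcol_spec hm0 (h1.trans h2)

lemma four_pow_pred (k : ℕ) (hk : 1 ≤ k) : 4 * 2 ^ k = 4 * 2 ^ (k - 1) * 2 := by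
  obtain ⟨m, rfl⟩ : ∃ m, k = m + 1 := ⟨k - 1, by omega⟩
  rw [Nat.add_sub_cancel, pow_succ]
  ring

/-- There is a `k`-edge-coloring of the complete graph on `4·2^k` vertices with
no rainbow triangle and no monochromatic `C₉`. -/
theorem gallaiRamsey_C9_lower (k : ℕ) (hk : 1 ≤ k) :
    ∃ c : Fin (4 * 2 ^ k) → Fin (4 * 2 ^ k) → Fin k,
      (∀ x y, c x y = c y x) ∧ ¬ HasRainbowTriangle c ∧ ¬ HasMonoCycle c 9 := by
  refine ⟨fun x y => ⟨dcol k (x : ℕ) (y : ℕ), by have := dcol_le k (x : ℕ) (y : ℕ); omega⟩,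
    ?_, ?_, ?_⟩
  · intro x y
    exact Fin.ext (dcol_symm k _ _)
  · rintro ⟨a, b, d, hab, had, hbd, h1, h2, h3⟩
    have hv1 : dcol k (a : ℕ) (b : ℕ) ≠ dcol k (a : ℕ) (d : ℕ) := fun h => h1 (Fin.ext h)
    have hv2 : dcol k (a : ℕ) (b : ℕ) ≠ dcol k (b : ℕ) (d : ℕ) := fun h => h2 (Fin.ext h)
    have hv3 : dcol k (a : ℕ) (d : ℕ) ≠ dcol k (b : ℕ) (d : ℕ) := fun h => h3 (Fin.ext h)
    have u1 := dcol_ultra k (a : ℕ) (b : ℕ) (d : ℕ)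
    have u2 := dcol_ultra k (a : ℕ) (d : ℕ) (b : ℕ)
    have u3 := dcol_ultra k (b : ℕ) (d : ℕ) (a : ℕ)
    rw [dcol_symm k (d : ℕ) (b : ℕ)] at u1
    rw [dcol_symm k (b : ℕ) (a : ℕ)] at u3
    omega
  · rintro ⟨col, v, hinj, hcyc⟩
    set i := (col : ℕ) with hidef
    have hik : i < k := col.isLt
    have hc : ∀ j : Fin 9, dcol k ((v j : ℕ)) ((v (j + 1) : ℕ)) = i := by
      intro j
      exact congrArg Fin.val (hcyc j)
    by_cases hi : i = 0
    · -- color 0: all cycle vertices lie in the same block of 8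
      have heq8 : ∀ j : Fin 9, (v j : ℕ) / 8 = (v (j + 1) : ℕ) / 8 := by
        intro j
        by_cases hk1 : k = 1
        · have hcard : 4 * 2 ^ k = 8 := by rw [hk1]; norm_num
          have b1 : (v j : ℕ) < 8 := by have := (v j).isLt; omega
          have b2 : (v (j + 1) : ℕ) < 8 := by have := (v (j + 1)).isLt; omega
          rw [Nat.div_eq_of_lt b1, Nat.div_eq_of_lt b2]
        · have h1 : dcol k ((v j : ℕ)) ((v (j + 1) : ℕ)) < 1 := by rw [hc j]; omega
          have := dcol_max h1 (by omega)
          norm_num at this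
          exact this
      have hall : ∀ n (h : n < 9), (v ⟨n, h⟩ : ℕ) / 8 = (v 0 : ℕ) / 8 := by
        intro n
        induction n with
        | zero => intro h; rfl
        | succ m ih =>
          intro h
          have hm : m < 9 := by omega
          have step := heq8 ⟨m, hm⟩
          have hadd : (⟨m, hm⟩ : Fin 9) + 1 = ⟨m + 1, h⟩ := by
            apply Fin.ext
            simp [Fin.add_def]
            omega
          rw [hadd] at step
          rw [← step]
          exact ih hm
      have hall' : ∀ j : Fin 9, (v j : ℕ) / 8 = (v 0 : ℕ) / 8 := fun j => hall j.1 j.2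
      -- pigeonhole: 9 distinct vertices with the same /8 value
      have Finj : Function.Injective
          (fun j : Fin 9 => (⟨(v j : ℕ) % 8, Nat.mod_lt _ (by norm_num)⟩ : Fin 8)) := by
        intro j1 j2 h
        simp only [Fin.mk.injEq] at h
        apply hinj
        apply Fin.ext
        have hd : (v j1 : ℕ) / 8 = (v j2 : ℕ) / 8 := (hall' j1).trans (hall' j2).symm
        omega
      have := Fintype.card_le_of_injective _ Finj
      simp at this
    · -- color i ≥ 1: bipartite class, but a 9-cycle is odd
      have hstep : ∀ j : Fin 9, (v j : ℕ) / (4 * 2 ^ i) % 2 ≠ (v (j + 1) : ℕ) / (4 * 2 ^ i) % 2 := by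
        intro j
        have hne : (v j : ℕ) / (4 * 2 ^ i) ≠ (v (j + 1) : ℕ) / (4 * 2 ^ i) := by
          have := dcol_spec (k := k) (x := (v j : ℕ)) (y := (v (j + 1) : ℕ))
            (by rw [hc j]; exact hi)
          rwa [hc j] at this
        by_cases htop : i = k - 1
        · have hcard : 4 * 2 ^ k = 4 * 2 ^ i * 2 := by
            rw [htop]; exact four_pow_pred k hk
          have hb1 : (v j : ℕ) / (4 * 2 ^ i) < 2 := by
            apply Nat.div_lt_of_lt_mul
            have := (v j).isLt
            omega
          have hb2 : (v (j + 1) : ℕ) / (4 * 2 ^ i) < 2 := by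
            apply Nat.div_lt_of_lt_mul
            have := (v (j + 1)).isLt
            omega
          revert hne hb1 hb2
          generalize (v j : ℕ) / (4 * 2 ^ i) = A
          generalize (v (j + 1) : ℕ) / (4 * 2 ^ i) = B
          omega
        · have hlt : i + 1 ≤ k - 1 := by omega
          have hmax := dcol_max (k := k) (x := (v j : ℕ)) (y := (v (j + 1) : ℕ)) (j := i + 1)
            (by rw [hc j]; omega) hlt
          have heq2 : (v j : ℕ) / (4 * 2 ^ i) / 2 = (v (j + 1) : ℕ) / (4 * 2 ^ i) / 2 := by
            rw [Nat.div_div_eq_div_mul, Nat.div_div_eq_div_mul]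
            have h4 : 4 * 2 ^ i * 2 = 4 * 2 ^ (i + 1) := by ring
            rw [h4]
            exact hmax
          revert hne heq2
          generalize (v j : ℕ) / (4 * 2 ^ i) = A
          generalize (v (j + 1) : ℕ) / (4 * 2 ^ i) = B
          omega
      have key : ∀ n (h : n < 9),
          (v ⟨n, h⟩ : ℕ) / (4 * 2 ^ i) % 2 = ((v 0 : ℕ) / (4 * 2 ^ i) % 2 + n) % 2 := by
        intro n
        induction n with
        | zero =>
          intro h
          show (v 0 : ℕ) / (4 * 2 ^ i) % 2 = ((v 0 : ℕ) / (4 * 2 ^ i) % 2 + 0) % 2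
          omega
        | succ m ih =>
          intro h
          have hm : m < 9 := by omega
          have step := hstep ⟨m, hm⟩
          have hadd : (⟨m, hm⟩ : Fin 9) + 1 = ⟨m + 1, h⟩ := by
            apply Fin.ext
            simp [Fin.add_def]
            omega
          rw [hadd] at step
          have := ih hm
          omega
      have h8 := hstep ⟨8, by norm_num⟩
      have hadd8 : (⟨8, by norm_num⟩ : Fin 9) + 1 = 0 := by
        apply Fin.ext
        simp [Fin.add_def]
      rw [hadd8] at h8
      have := key 8 (by norm_num)
      omega
end

section
/- For all integers k ≥ 2 and n ≥ 2, the Gallai-Ramsey number satisfies gr_k(K_3, C_{2n+1}) ≥ n·2^k + 1; equivalently, there exists a k-edge-coloring of the complete graph on n·2^k vertices that contains no rainbow triangle and no monochromatic copy of the cycle C_{2n+1}. -/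
namespace GRaux

lemma testBit_log2_self {x : ℕ} (hx : x ≠ 0) : x.testBit x.log2 = true := by
  have h1 : 2 ^ x.log2 ≤ x := Nat.log2_self_le hx
  have h2 : x < 2 ^ (x.log2 + 1) := Nat.lt_log2_self
  have hdiv : x / 2 ^ x.log2 = 1 := by
    apply Nat.div_eq_of_lt_le (by simpa using h1)
    rw [pow_succ] at h2
    omega
  rw [Nat.testBit_eq_decide_div_mod_eq, hdiv]
  simp

lemma log2_xor_eq {u v : ℕ} (hv : v ≠ 0) (hlt : u < 2 ^ v.log2) :
    (u ^^^ v).log2 = v.log2 := by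
  have hb : (u ^^^ v).testBit v.log2 = true := by
    rw [Nat.testBit_xor, Nat.testBit_lt_two_pow hlt, testBit_log2_self hv]
    rfl
  have hne : u ^^^ v ≠ 0 := by
    intro h; rw [h] at hb; simp [Nat.zero_testBit] at hb
  have hub : u ^^^ v < 2 ^ (v.log2 + 1) :=
    Nat.xor_lt_two_pow (lt_trans hlt (Nat.pow_lt_pow_succ (by norm_num))) Nat.lt_log2_self
  have h1 : (u ^^^ v).log2 < v.log2 + 1 := (Nat.log2_lt hne).2 hub
  have h2 : ¬ ((u ^^^ v).log2 < v.log2) := by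
    intro h
    have := (Nat.log2_lt hne).1 h
    exact absurd (Nat.testBit_lt_two_pow this) (by simp [hb])
  omega

/-- The block-level coloring. -/
def bcol (a b : ℕ) : ℕ := if a = b then 0 else (a ^^^ b).log2 + 1

lemma bcol_comm (a b : ℕ) : bcol a b = bcol b a := by
  unfold bcol
  rcases eq_or_ne a b with h | h
  · simp [h]
  · rw [if_neg h, if_neg (Ne.symm h), Nat.xor_comm]

lemma bcol_lt (a b K : ℕ) (ha : a < 2 ^ K) (hb : b < 2 ^ K) : bcol a b < K + 1 := by
  unfold bcol
  rcases eq_or_ne a b with h | h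
  · simp [h]
  · rw [if_neg h]
    have hne : a ^^^ b ≠ 0 := by
      intro hz; exact h (by simpa using congrArg (· ^^^ b) hz)
    have := (Nat.log2_lt hne).2 (Nat.xor_lt_two_pow ha hb)
    omega

lemma bcol_eq_zero {a b : ℕ} (h : bcol a b = 0) : a = b := by
  unfold bcol at h
  by_contra hne
  rw [if_neg hne] at h
  omega

lemma bcol_bit {a b t : ℕ} (h : bcol a b = t + 1) : a.testBit t ≠ b.testBit t := by
  unfold bcol at h
  rcases eq_or_ne a b with hab | hab
  · rw [if_pos hab] at h; omega
  · rw [if_neg hab] at h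
    have hl : (a ^^^ b).log2 = t := by omega
    have hne : a ^^^ b ≠ 0 := fun hz => hab (by simpa using congrArg (· ^^^ b) hz)
    have hbit := testBit_log2_self hne
    rw [hl, Nat.testBit_xor] at hbit
    intro heq
    rw [heq, Bool.xor_self] at hbit
    exact Bool.false_ne_true hbit

lemma log2_lt_imp {u v : ℕ} (h : u.log2 < v.log2) : u < 2 ^ v.log2 :=
  lt_of_lt_of_le Nat.lt_log2_self (Nat.pow_le_pow_right (by norm_num) h)

lemma bcol_tri (A B D : ℕ) :
    bcol A B = bcol A D ∨ bcol A B = bcol B D ∨ bcol A D = bcol B D := by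
  rcases eq_or_ne A B with hAB | hAB
  · right; right; rw [hAB]
  rcases eq_or_ne A D with hAD | hAD
  · right; left; rw [hAD, bcol_comm]
  rcases eq_or_ne B D with hBD | hBD
  · left; rw [hBD]
  have hu : A ^^^ B ≠ 0 := fun h => hAB (by simpa using congrArg (· ^^^ B) h)
  have hv : A ^^^ D ≠ 0 := fun h => hAD (by simpa using congrArg (· ^^^ D) h)
  have hw : (A ^^^ B) ^^^ (A ^^^ D) = B ^^^ D := by
    rw [Nat.xor_comm A B, Nat.xor_assoc, ← Nat.xor_assoc A A, Nat.xor_self, Nat.zero_xor]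
  rcases lt_trichotomy (A ^^^ B).log2 (A ^^^ D).log2 with h | h | h
  · right; right
    unfold bcol
    rw [if_neg hAD, if_neg hBD, ← hw, log2_xor_eq hv (log2_lt_imp h)]
  · left
    unfold bcol
    rw [if_neg hAB, if_neg hAD, h]
  · right; left
    unfold bcol
    rw [if_neg hAB, if_neg hBD, ← hw, Nat.xor_comm (A ^^^ B),
      log2_xor_eq hu (log2_lt_imp h)]

end GRaux

open GRaux Fin.NatCast in
/-- For `k ≥ 2` and `n ≥ 2`, there is a `k`-edge-coloring of the complete graph
on `n·2^k` vertices with no rainbow triangle and no monochromatic `C_{2n+1}`;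
equivalently, `gr_k(K₃, C_{2n+1}) ≥ n·2^k + 1`. -/
theorem gallaiRamsey_oddCycle_lower (k n : ℕ) (hk : 2 ≤ k) (hn : 2 ≤ n) :
    ∃ c : Fin (n * 2 ^ k) → Fin (n * 2 ^ k) → Fin k,
      (∀ x y, c x y = c y x) ∧ ¬ HasRainbowTriangle c ∧
        ¬ HasMonoCycle c (2 * n + 1) := by
  have h2n : 0 < 2 * n := by omega
  have hpow : n * 2 ^ k = 2 * n * 2 ^ (k - 1) := by
    have h : 2 ^ k = 2 * 2 ^ (k - 1) := by
      conv_lhs => rw [show k = (k - 1) + 1 by omega]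
      rw [pow_succ]; ring
    rw [h]; ring
  set blk : Fin (n * 2 ^ k) → ℕ := fun x => x.val / (2 * n) with hblkdef
  have hblk : ∀ x, blk x < 2 ^ (k - 1) := by
    intro x
    have hx : (x : ℕ) < 2 ^ (k - 1) * (2 * n) := by
      have := x.isLt
      have h2 : 2 ^ (k - 1) * (2 * n) = 2 * n * 2 ^ (k - 1) := by ring
      omega
    exact Nat.div_lt_iff_lt_mul h2n |>.mpr hx
  have hc : ∀ x y : Fin (n * 2 ^ k), bcol (blk x) (blk y) < k := by
    intro x y
    have := bcol_lt _ _ _ (hblk x) (hblk y)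
    omega
  refine ⟨fun x y => ⟨bcol (blk x) (blk y), hc x y⟩, ?_, ?_, ?_⟩
  · intro x y
    simp only [Fin.mk.injEq]
    exact bcol_comm _ _
  · rintro ⟨a, b, d, hab, had, hbd, h1, h2, h3⟩
    rcases bcol_tri (blk a) (blk b) (blk d) with h | h | h
    · exact h1 (Fin.ext h)
    · exact h2 (Fin.ext h)
    · exact h3 (Fin.ext h)
  · rintro ⟨col, v, hinj, hcyc⟩
    have hv : ∀ i : Fin (2 * n + 1), bcol (blk (v i)) (blk (v (i + 1))) = col.val := by
      intro i
      rw [← hcyc i]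
    by_cases hcol : col.val = 0
    · -- all blocks equal; too few vertices in one block
      have heq : ∀ i : Fin (2 * n + 1), blk (v i) = blk (v (i + 1)) := by
        intro i
        exact bcol_eq_zero (by rw [hv i, hcol])
      have hall : ∀ m : ℕ, blk (v (m : Fin (2 * n + 1))) = blk (v 0) := by
        intro m
        induction m with
        | zero => simp
        | succ m ih =>
          have hcast : ((m + 1 : ℕ) : Fin (2 * n + 1)) = (m : Fin (2 * n + 1)) + 1 := by
            push_cast; ring
          rw [hcast, ← heq (m : Fin (2 * n + 1)), ih]
      have hall' : ∀ j : Fin (2 * n + 1), blk (v j) = blk (v 0) := by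
        intro j
        have := hall j.val
        rwa [Fin.cast_val_eq_self] at this
      set B := blk (v 0) with hB
      clear_value B
      have hmem : ∀ i : Fin (2 * n + 1),
          (v i).val ∈ Finset.Ico (2 * n * B) (2 * n * B + 2 * n) := by
        intro i
        have hdiv : (v i).val / (2 * n) = B := hall' i
        have hdm := Nat.div_add_mod (v i).val (2 * n)
        rw [hdiv] at hdm
        have hmod := Nat.mod_lt (v i).val h2n
        simp only [Finset.mem_Ico]
        omega
      have hcard := Finset.card_le_card_of_injOn
        (s := (Finset.univ : Finset (Fin (2 * n + 1)))) (fun i => (v i).val)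
        (fun i _ => hmem i)
        (fun i _ j _ h => hinj (Fin.ext h))
      simp only [Finset.card_univ, Fintype.card_fin, Nat.card_Ico] at hcard
      omega
    · -- color class is bipartite by bit `t`, no odd cycle
      set t := col.val - 1 with ht
      have hvt : ∀ i : Fin (2 * n + 1),
          bcol (blk (v i)) (blk (v (i + 1))) = t + 1 := by
        intro i; rw [hv i]; omega
      set g : Fin (2 * n + 1) → Bool := fun j => (blk (v j)).testBit t with hg
      have hflip : ∀ j : Fin (2 * n + 1), g (j + 1) = !(g j) := by
        intro j
        have := bcol_bit (hvt j)
        revert this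
        simp only [hg]
        cases (blk (v j)).testBit t <;> cases (blk (v (j + 1))).testBit t <;> simp
      have hpar : ∀ m : ℕ,
          g (m : Fin (2 * n + 1)) = if m % 2 = 0 then g 0 else !(g 0) := by
        intro m
        induction m with
        | zero => simp
        | succ m ih =>
          have hcast : ((m + 1 : ℕ) : Fin (2 * n + 1)) = (m : Fin (2 * n + 1)) + 1 := by
            push_cast; ring
          rw [hcast, hflip, ih]
          rcases Nat.even_or_odd m with he | ho
          · have h1 : m % 2 = 0 := Nat.even_iff.mp he
            have h2 : (m + 1) % 2 = 1 := by omega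
            simp [h1, h2]
          · have h1 : m % 2 = 1 := Nat.odd_iff.mp ho
            have h2 : (m + 1) % 2 = 0 := by omega
            simp [h1, h2]
      have hfin := hpar (2 * n + 1)
      rw [Fin.natCast_self] at hfin
      have : (2 * n + 1) % 2 = 1 := by omega
      rw [this] at hfin
      simp at hfin
end

section
/- For any edge-coloring c of a complete graph G on at least 2 vertices that contains no rainbow triangle, the vertex set V(G) can be partitioned into nonempty sets V_1, V_2, …, V_p with p > 1 such that, for each pair i ≠ j, all edges between V_i and V_j receive the same color under c, and at most two colors in total are used on edges joining distinct parts. -/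
namespace GallaiAux

variable {V C : Type*}

def Stp (c : V → V → C) (r b : C) (x y : V) : Prop := c x y ≠ r ∧ c x y ≠ b

def Rch (c : V → V → C) (r b : C) : V → V → Prop := Relation.ReflTransGen (Stp c r b)

variable {c : V → V → C} {r b : C}

lemma rch_refl (x : V) : Rch c r b x x := Relation.ReflTransGen.refl

lemma rch_symm (hsym : ∀ x y, c x y = c y x) {x y : V} (h : Rch c r b x y) :
    Rch c r b y x := by
  induction h with
  | refl => exact Relation.ReflTransGen.refl
  | tail _ h ih =>
      exact Relation.ReflTransGen.head ⟨by rw [hsym]; exact h.1, by rw [hsym]; exact h.2⟩ ih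

lemma not_rch_color {x y : V} (h : ¬ Rch c r b x y) : c x y = r ∨ c x y = b := by
  by_contra h'
  push_neg at h'
  exact h (Relation.ReflTransGen.single ⟨h'.1, h'.2⟩)

lemma tri2 (hrb : ¬ HasRainbowTriangle c) {x y z : V} (hxy : x ≠ y) (hxz : x ≠ z)
    (hyz : y ≠ z) (hne : c x y ≠ c x z) : c y z = c x y ∨ c y z = c x z := by
  by_contra h'
  push_neg at h'
  exact hrb ⟨x, y, z, hxy, hxz, hyz, hne, fun h => h'.1 h.symm, fun h => h'.2 h.symm⟩

lemma cross_const (hsym : ∀ x y, c x y = c y x) (hrb : ¬ HasRainbowTriangle c)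
    {x x' y : V} (hxx' : Rch c r b x x') (hxy : ¬ Rch c r b x y) :
    c x y = c x' y := by
  induction hxx' with
  | refl => rfl
  | @tail m m' hxm hstep ih =>
      have hmy : ¬ Rch c r b m y := fun h => hxy (hxm.trans h)
      have hm'y : ¬ Rch c r b m' y := fun h => hxy ((hxm.tail hstep).trans h)
      by_cases hmm' : m = m'
      · rw [ih, hmm']
      have hmyne : m ≠ y := fun h => hmy (h ▸ rch_refl m)
      have hm'yne : m' ≠ y := fun h => hm'y (h ▸ rch_refl m')
      have h2 := not_rch_color hm'y
      have := tri2 hrb hmm' hmyne hm'yne (by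
        rcases not_rch_color hmy with h | h <;> rw [h] <;> [exact hstep.1; exact hstep.2])
      rw [ih]
      rcases this with h | h
      · exfalso
        rcases h2 with h2 | h2 <;> rw [h2] at h <;> [exact hstep.1 h.symm; exact hstep.2 h.symm]
      · exact h.symm

/-- Case 2.2.a of the main induction. -/
lemma case22a (hsym : ∀ x y, c x y = c y x) (hrb : ¬ HasRainbowTriangle c) (v : V)
    (hsym' : ∀ x y : {w : V // w ≠ v}, (fun a b : {w : V // w ≠ v} => c a.1 b.1) x y = (fun a b : {w : V // w ≠ v} => c a.1 b.1) y x)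
    (hrb' : ¬ HasRainbowTriangle (fun a b : {w : V // w ≠ v} => c a.1 b.1))
    {g : C} (hgr : g ≠ r) (hgb : g ≠ b) (hrbne : r ≠ b)
    (hallS : ∀ x : {w : V // w ≠ v}, ∃ w', Rch (fun a b : {w : V // w ≠ v} => c a.1 b.1) r b x w' ∧ c v w'.1 = g)
    (hallg : ∀ w : {w : V // w ≠ v}, c v w.1 ≠ r → c v w.1 ≠ b → c v w.1 = g)
    (z : {w : V // w ≠ v}) (hz : c v z.1 = r)
    (x₀ y₀ : {w : V // w ≠ v})
    (hx0y0 : ¬ Rch (fun a b : {w : V // w ≠ v} => c a.1 b.1) r b x₀ y₀) :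
    ∃ A : Set V, A.Nonempty ∧ Aᶜ.Nonempty ∧ ∀ x ∈ A, ∀ y ∈ Aᶜ, c x y = r ∨ c x y = g := by
  classical
  set c' : {w : V // w ≠ v} → {w : V // w ≠ v} → C := fun a b => c a.1 b.1 with hc'
  -- the key triangle fact
  have key : ∀ w : {w : V // w ≠ v}, c v w.1 = g → ¬ Rch c' r b z w → c z.1 w.1 = r := by
    intro w hwg hnzw
    have hzw : z.1 ≠ w.1 := fun h => hnzw (by rw [Subtype.ext h]; exact rch_refl w)
    have ht := tri2 hrb (x := v) (y := z.1) (z := w.1) (Ne.symm z.2) (Ne.symm w.2) hzw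
      (by rw [hz, hwg]; exact fun h => hgr h.symm)
    have ht'' : c z.1 w.1 = r ∨ c z.1 w.1 = b := not_rch_color (c := c') hnzw
    rcases ht'' with ht' | ht'
    · exact ht'
    · exfalso
      rcases ht with h | h
      · rw [hz] at h; rw [ht'] at h; exact hrbne h.symm
      · rw [hwg] at h; rw [ht'] at h; exact hgb h.symm
  refine ⟨{x : V | ∃ h : x ≠ v, Rch c' r b z ⟨x, h⟩}, ⟨z.1, z.2, rch_refl z⟩,
    ⟨v, fun h => h.1 rfl⟩, ?_⟩
  rintro x ⟨hxv, hrzx⟩ y hy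
  by_cases hyv : y = v
  · -- show c x y ∈ {r, g} where y = v
    have hvx : c v x = r ∨ c v x = g := by
      by_cases hxr : c v x = r
      · exact Or.inl hxr
      by_cases hxb : c v x = b
      · -- contradiction : r = b
        exfalso
        obtain ⟨u, hnzu⟩ : ∃ u, ¬ Rch c' r b z u := by
          by_cases hzx₀ : Rch c' r b z x₀
          · exact ⟨y₀, fun h => hx0y0 ((rch_symm hsym' hzx₀).trans h)⟩
          · exact ⟨x₀, hzx₀⟩
        obtain ⟨wu, hwur, hwug⟩ := hallS u
        have hnzwu : ¬ Rch c' r b z wu := fun h => hnzu (h.trans (rch_symm hsym' hwur))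
        have hkz : c z.1 wu.1 = r := key wu hwug hnzwu
        have hnxwu : ¬ Rch c' r b ⟨x, hxv⟩ wu := fun h => hnzwu (hrzx.trans h)
        have hxwne : x ≠ wu.1 := fun h => hnxwu (by rw [show (⟨x, hxv⟩ : {w : V // w ≠ v}) = wu from Subtype.ext h]; exact rch_refl wu)
        have ht := tri2 hrb (x := v) (y := x) (z := wu.1) (Ne.symm hxv) (Ne.symm wu.2) hxwne
          (by rw [hxb, hwug]; exact fun h => hgb h.symm)
        have hnrc : c x wu.1 = r ∨ c x wu.1 = b := not_rch_color (c := c') hnxwu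
        have hxwu : c x wu.1 = b := by
          rcases hnrc with h' | h'
          · exfalso
            rcases ht with h | h
            · rw [hxb] at h; rw [h'] at h; exact hrbne h
            · rw [hwug] at h; rw [h'] at h; exact hgr h.symm
          · exact h'
        have hcc : c z.1 wu.1 = c x wu.1 := cross_const hsym' hrb' hrzx hnzwu
        rw [hkz, hxwu] at hcc
        exact hrbne hcc
      · exact Or.inr (hallg ⟨x, hxv⟩ hxr hxb)
    rw [hyv, hsym]
    exact hvx
  · -- y ≠ v, y not reachable from z
    have hnzy : ¬ Rch c' r b z ⟨y, hyv⟩ := fun h => hy ⟨hyv, h⟩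
    obtain ⟨wy, hwyr, hwyg⟩ := hallS ⟨y, hyv⟩
    have hnzwy : ¬ Rch c' r b z wy := fun h => hnzy (h.trans (rch_symm hsym' hwyr))
    have hkzy : c z.1 wy.1 = r := key wy hwyg hnzwy
    have hnyz : ¬ Rch c' r b ⟨y, hyv⟩ z := fun h => hnzy (rch_symm hsym' h)
    have h1 : c y z.1 = c wy.1 z.1 := cross_const hsym' hrb' hwyr hnyz
    have hzyr : c z.1 y = r := by
      rw [hsym, h1, hsym]; exact hkzy
    have h2 : c z.1 y = c x y := cross_const hsym' hrb' hrzx hnzy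
    exact Or.inl (by rw [← h2, hzyr])


lemma rch_comm {x y : V} : Rch c r b x y ↔ Rch c b r x y := by
  constructor <;> intro h <;>
  · induction h with
    | refl => exact Relation.ReflTransGen.refl
    | tail _ h ih => exact ih.tail ⟨h.2, h.1⟩

lemma rch_stay {A : Set V} (hcr : ∀ a ∈ A, ∀ e ∈ Aᶜ, c a e = r ∨ c a e = b)
    {x z : V} (hx : x ∈ A) (h : Rch c r b x z) : z ∈ A := by
  induction h with
  | refl => exact hx
  | @tail m m' _ hstep ih =>
      by_contra hm'
      rcases hcr m ih m' hm' with h | h <;> [exact hstep.1 h; exact hstep.2 h]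

def Split (c : V → V → C) : Prop :=
  ∃ (r b : C) (A : Set V), A.Nonempty ∧ Aᶜ.Nonempty ∧
    ∀ x ∈ A, ∀ y ∈ Aᶜ, c x y = r ∨ c x y = b

theorem split_exists {C : Type*} : ∀ (n : ℕ) (V : Type u) [Fintype V] (c : V → V → C),
    Fintype.card V = n → 2 ≤ Fintype.card V → (∀ x y, c x y = c y x) →
    ¬ HasRainbowTriangle c → Split c := by
  intro n
  induction n using Nat.strong_induction_on with
  | _ n ih =>
  intro V _ c hn h2 hsym hrb
  classical
  obtain ⟨v⟩ : Nonempty V := Fintype.card_pos_iff.mp (by omega)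
  have hcard' : Fintype.card {w : V // w ≠ v} = Fintype.card V - 1 := by
    have h1 : Fintype.card {w : V // w = v} = 1 := Fintype.card_subtype_eq v
    have := Fintype.card_subtype_compl (fun w : V => w = v)
    rw [h1] at this
    exact this
  set c' : {w : V // w ≠ v} → {w : V // w ≠ v} → C := fun a b => c a.1 b.1 with hc'
  have hsym' : ∀ x y : {w : V // w ≠ v}, c' x y = c' y x := fun x y => hsym x.1 y.1
  have hrb' : ¬ HasRainbowTriangle c' := by
    rintro ⟨a, b, d, hab, had, hbd, e1, e2, e3⟩
    exact hrb ⟨a.1, b.1, d.1, fun h => hab (Subtype.ext h), fun h => had (Subtype.ext h),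
      fun h => hbd (Subtype.ext h), e1, e2, e3⟩
  by_cases hbig : 2 ≤ Fintype.card {w : V // w ≠ v}
  · -- inductive step
    obtain ⟨r, b, A', ⟨x₀, hx₀⟩, ⟨y₀, hy₀⟩, hcr'⟩ :=
      ih (Fintype.card {w : V // w ≠ v}) (by omega) {w : V // w ≠ v} c' rfl hbig hsym' hrb'
    have hnxy : ¬ Rch c' r b x₀ y₀ := fun h => hy₀ (rch_stay hcr' hx₀ h)
    by_cases h1 : ∀ w : {w : V // w ≠ v}, c v w.1 = r ∨ c v w.1 = b
    · -- Case 1: all edges at v have colors in {r, b}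
      refine ⟨r, b, {x : V | ∃ h : x ≠ v, Rch c' r b x₀ ⟨x, h⟩},
        ⟨x₀.1, x₀.2, rch_refl x₀⟩, ⟨y₀.1, fun hmem => hnxy hmem.2⟩, ?_⟩
      rintro x ⟨hxv, hrx⟩ y hy
      by_cases hyv : y = v
      · rw [hyv, hsym]
        exact h1 ⟨x, hxv⟩
      · have hny : ¬ Rch c' r b ⟨x, hxv⟩ ⟨y, hyv⟩ := fun h => hy ⟨hyv, hrx.trans h⟩
        exact not_rch_color (c := c') hny
    · push_neg at h1
      obtain ⟨w₀, hw₀r, hw₀b⟩ : ∃ w : {w : V // w ≠ v}, c v w.1 ≠ r ∧ c v w.1 ≠ b := by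
        obtain ⟨w, hw⟩ := h1
        exact ⟨w, by tauto⟩
      by_cases h2 : ∀ x : {w : V // w ≠ v}, ∃ w', Rch c' r b x w' ∧ (c v w'.1 ≠ r ∧ c v w'.1 ≠ b)
      · -- Case 2.2 : every class contains a g-neighbour of v
        set g := c v w₀.1 with hg
        have guniq : ∀ w w' : {u : V // u ≠ v}, ¬ Rch c' r b w w' → c v w.1 ≠ r →
            c v w.1 ≠ b → c v w'.1 ≠ r → c v w'.1 ≠ b → c v w.1 = c v w'.1 := by
          intro w w' hnr h1r h1b h2r h2b
          have hww' : w.1 ≠ w'.1 := fun h => hnr (by rw [Subtype.ext h]; exact rch_refl w')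
          have hcol : c w.1 w'.1 = r ∨ c w.1 w'.1 = b := not_rch_color (c := c') hnr
          have ht := tri2 hrb (x := w.1) (y := w'.1) (z := v) hww' w.2 w'.2
            (by rw [hsym w.1 v]; rcases hcol with h | h <;> rw [h] <;> intro hh <;>
              [exact h1r hh.symm; exact h1b hh.symm])
          rcases ht with h | h
          · exfalso
            rw [hsym w'.1 v] at h
            rcases hcol with h' | h' <;> rw [h'] at h <;> [exact h2r h; exact h2b h]
          · rw [hsym v w.1, hsym v w'.1]
            exact h.symm
        have allg : ∀ w : {u : V // u ≠ v}, c v w.1 ≠ r → c v w.1 ≠ b → c v w.1 = g := by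
          intro w hwr hwb
          by_cases hww₀ : Rch c' r b w₀ w
          · obtain ⟨u, hnu⟩ : ∃ u, ¬ Rch c' r b w₀ u := by
              by_cases hx : Rch c' r b w₀ x₀
              · exact ⟨y₀, fun h => hnxy ((rch_symm hsym' hx).trans h)⟩
              · exact ⟨x₀, hx⟩
            obtain ⟨wu, hwur, hwuc⟩ := h2 u
            have hnwwu : ¬ Rch c' r b w wu := fun h =>
              hnu ((hww₀.trans h).trans (rch_symm hsym' hwur))
            have hnw₀wu : ¬ Rch c' r b w₀ wu := fun h => hnu (h.trans (rch_symm hsym' hwur))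
            rw [guniq w wu hnwwu hwr hwb hwuc.1 hwuc.2]
            exact (guniq w₀ wu hnw₀wu hw₀r hw₀b hwuc.1 hwuc.2).symm
          · exact (guniq w₀ w hww₀ hw₀r hw₀b hwr hwb).symm
        by_cases hreq : r = b
        · -- degenerate : only one colour between classes
          refine ⟨r, g, {v}, ⟨v, rfl⟩, ⟨x₀.1, x₀.2⟩, ?_⟩
          intro x hx y hy
          rw [Set.mem_singleton_iff] at hx
          rw [hx]
          have hyv : y ≠ v := hy
          by_cases hr : c v y = r
          · exact Or.inl hr
          by_cases hb : c v y = b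
          · exact Or.inl (hreq ▸ hb)
          · exact Or.inr (allg ⟨y, hyv⟩ hr hb)
        · by_cases hzr : ∃ z : {w : V // w ≠ v}, c v z.1 = r
          · obtain ⟨z, hz⟩ := hzr
            obtain ⟨A, hA⟩ := case22a hsym hrb v hsym' hrb' hw₀r hw₀b hreq
              (fun x => by
                obtain ⟨w', hw1, hw2⟩ := h2 x
                exact ⟨w', hw1, allg w' hw2.1 hw2.2⟩)
              allg z hz x₀ y₀ hnxy
            exact ⟨r, g, A, hA⟩
          · by_cases hzb : ∃ z : {w : V // w ≠ v}, c v z.1 = b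
            · obtain ⟨z, hz⟩ := hzb
              obtain ⟨A, hA⟩ := case22a (r := b) (b := r) hsym hrb v hsym' hrb'
                hw₀b hw₀r (Ne.symm hreq)
                (fun x => by
                  obtain ⟨w', hw1, hw2⟩ := h2 x
                  exact ⟨w', rch_comm.mp hw1, allg w' hw2.1 hw2.2⟩)
                (fun w hb hr => allg w hr hb) z hz x₀ y₀ (fun h => hnxy (rch_comm.mpr h))
              exact ⟨b, g, A, hA⟩
            · -- all edges at v have colour g
              push_neg at hzr hzb
              refine ⟨g, g, {v}, ⟨v, rfl⟩, ⟨x₀.1, x₀.2⟩, ?_⟩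
              intro x hx y hy
              rw [Set.mem_singleton_iff] at hx
              rw [hx]
              have hy : y ≠ v := hy
              exact Or.inl (allg ⟨y, hy⟩ (hzr ⟨y, hy⟩) (hzb ⟨y, hy⟩))
      · -- Case 2.1 : some class has no g-neighbour of v
        push_neg at h2
        obtain ⟨u, hu⟩ := h2
        refine ⟨r, b, insert v {x : V | ∃ h : x ≠ v, ∃ w', Rch c' r b ⟨x, h⟩ w' ∧
          (c v w'.1 ≠ r ∧ c v w'.1 ≠ b)}, ⟨v, Set.mem_insert v _⟩, ⟨u.1, ?_⟩, ?_⟩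
        · intro hmem
          rcases hmem with h | ⟨h, w', hw1, hw2⟩
          · exact u.2 h
          · exact hw2.2 (hu w' (by rwa [Subtype.eta] at hw1) hw2.1)
        · intro x hx y hy
          have hyv : y ≠ v := fun h => hy (by rw [h]; exact Set.mem_insert v _)
          have hyS : ∀ w', ¬ (Rch c' r b ⟨y, hyv⟩ w' ∧ c v w'.1 ≠ r ∧ c v w'.1 ≠ b) := by
            intro w' hw
            exact hy (Set.mem_insert_of_mem _ ⟨hyv, w', hw.1, hw.2⟩)
          rcases hx with hxv' | ⟨hxv, w', hw1, hw2⟩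
          · -- x = v
            rw [hxv']
            by_contra hcon
            push_neg at hcon
            exact hyS ⟨y, hyv⟩ ⟨rch_refl _, hcon.1, hcon.2⟩
          · -- x ∈ S
            have hnxy2 : ¬ Rch c' r b ⟨x, hxv⟩ ⟨y, hyv⟩ := by
              intro h
              exact hyS w' ⟨(rch_symm hsym' h).trans hw1, hw2⟩
            exact not_rch_color (c := c') hnxy2
  · -- base case : exactly two vertices
    have hone : Fintype.card {w : V // w ≠ v} = 1 := by omega
    obtain ⟨x₀, hx₀⟩ := Fintype.exists_ne_of_one_lt_card (by omega) v
    refine ⟨c v x₀, c v x₀, {v}, ⟨v, rfl⟩, ⟨x₀, hx₀⟩, ?_⟩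
    intro x hx y hy
    rw [Set.mem_singleton_iff] at hx
    rw [hx]
    have hyv : y ≠ v := hy
    have : (⟨y, hyv⟩ : {w : V // w ≠ v}) = ⟨x₀, hx₀⟩ :=
      Fintype.card_le_one_iff.mp (by omega) _ _
    have hyx : y = x₀ := congrArg Subtype.val this
    exact Or.inl (by rw [hyx])

/-- From a split, build the full Gallai partition. -/
theorem partition_of_split [Fintype V] (hsym : ∀ x y, c x y = c y x)
    (hrb : ¬ HasRainbowTriangle c) (hsp : Split c) :
    ∃ p : ℕ, 1 < p ∧ ∃ P : Fin p → Set V,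
      (∀ i, (P i).Nonempty) ∧
      (∀ i j, i ≠ j → Disjoint (P i) (P j)) ∧
      (⋃ i, P i) = Set.univ ∧
      (∀ i j, i ≠ j → ∀ x ∈ P i, ∀ y ∈ P j, ∀ x' ∈ P i, ∀ y' ∈ P j,
        c x y = c x' y') ∧
      ∃ c₁ c₂ : C, ∀ i j, i ≠ j → ∀ x ∈ P i, ∀ y ∈ P j,
        c x y = c₁ ∨ c x y = c₂ := by
  classical
  obtain ⟨r, b, A, ⟨x₀, hx₀⟩, ⟨y₀, hy₀⟩, hcr⟩ := hsp
  have hnr : ¬ Rch c r b x₀ y₀ := fun h => hy₀ (rch_stay hcr hx₀ h)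
  let s : Setoid V := ⟨Rch c r b, ⟨rch_refl, rch_symm hsym, Relation.ReflTransGen.trans⟩⟩
  letI : DecidableEq (Quotient s) := Classical.decEq _
  have key : ∀ x y : V, (Quotient.mk s x = Quotient.mk s y) ↔ Rch c r b x y :=
    fun x y => ⟨fun h => Quotient.exact h, fun h => Quotient.sound (by exact h)⟩
  set p := Fintype.card (Quotient s) with hp
  have hp2 : 1 < p := by
    rw [Fintype.one_lt_card_iff]
    exact ⟨Quotient.mk s x₀, Quotient.mk s y₀, fun h => hnr ((key _ _).mp h)⟩
  let e : Quotient s ≃ Fin p := Fintype.equivFin (Quotient s)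
  refine ⟨p, hp2, fun i => {x | Quotient.mk s x = e.symm i}, ?_, ?_, ?_, ?_, ?_⟩
  · intro i
    obtain ⟨x, hx⟩ := Quotient.exists_rep (e.symm i)
    exact ⟨x, hx⟩
  · intro i j hij
    rw [Set.disjoint_left]
    intro x hx hx'
    exact hij (e.symm.injective (hx ▸ hx'))
  · ext x
    simp only [Set.mem_iUnion, Set.mem_setOf_eq, Set.mem_univ, iff_true]
    exact ⟨e (Quotient.mk s x), (Equiv.symm_apply_apply e _).symm⟩
  · intro i j hij x hx y hy x' hx' y' hy'
    have hxx' : Rch c r b x x' := (key _ _).mp (hx.trans hx'.symm)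
    have hyy' : Rch c r b y y' := (key _ _).mp (hy.trans hy'.symm)
    have hnxy : ¬ Rch c r b x y := fun h =>
      hij (e.symm.injective (hx.symm.trans (((key _ _).mpr h).trans hy)))
    have hnyx' : ¬ Rch c r b y x' := by
      intro h
      exact hnxy (hxx'.trans (rch_symm hsym h))
    calc c x y = c x' y := cross_const hsym hrb hxx' hnxy
    _ = c y x' := hsym _ _
    _ = c y' x' := cross_const hsym hrb hyy' hnyx'
    _ = c x' y' := hsym _ _
  · refine ⟨r, b, fun i j hij x hx y hy => ?_⟩
    have hnxy : ¬ Rch c r b x y := fun h =>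
      hij (e.symm.injective (hx.symm.trans (((key _ _).mpr h).trans hy)))
    exact not_rch_color hnxy


end GallaiAux


/-- Gallai's structure theorem: any rainbow-triangle-free edge-coloring of a
complete graph on at least two vertices admits a nontrivial partition into
nonempty parts such that edges between any fixed pair of parts are
monochromatic, and at most two colors appear between parts in total. -/
theorem gallai_partition {V C : Type*} [Fintype V] (hV : 2 ≤ Fintype.card V)
    (c : V → V → C) (hsym : ∀ x y, c x y = c y x)
    (hrb : ¬ HasRainbowTriangle c) :
    ∃ p : ℕ, 1 < p ∧ ∃ P : Fin p → Set V,
      (∀ i, (P i).Nonempty) ∧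
      (∀ i j, i ≠ j → Disjoint (P i) (P j)) ∧
      (⋃ i, P i) = Set.univ ∧
      (∀ i j, i ≠ j → ∀ x ∈ P i, ∀ y ∈ P j, ∀ x' ∈ P i, ∀ y' ∈ P j,
        c x y = c x' y') ∧
      ∃ c₁ c₂ : C, ∀ i j, i ≠ j → ∀ x ∈ P i, ∀ y ∈ P j,
        c x y = c₁ ∨ c x y = c₂ :=
  GallaiAux.partition_of_split hsym hrb
    (GallaiAux.split_exists (Fintype.card V) V c rfl hV hsym hrb)
end

section
/- For every integer k ≥ 1, the Gallai-Ramsey number gr_k(K_3, K_3) equals 5^{k/2} + 1 if k is even, and equals 2·5^{(k-1)/2} + 1 if k is odd; that is, this value is the least positive integer n such that every k-edge-coloring of the complete graph K_n contains a rainbow triangle or a monochromatic triangle. -/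
namespace GRK3

open Finset

def gRS (t : ℕ) : ℕ := if Even t then 5 ^ (t / 2) else 2 * 5 ^ (t / 2)

lemma five_pow_pos (j : ℕ) : 0 < 5 ^ j := pow_pos (by norm_num) j

lemma gRS_even (j : ℕ) : gRS (2 * j) = 5 ^ j := by
  have h1 : Even (2 * j) := ⟨j, by ring⟩
  have e1 : (2 * j) / 2 = j := by omega
  simp [gRS, h1, e1]

lemma gRS_odd (j : ℕ) : gRS (2 * j + 1) = 2 * 5 ^ j := by
  have h1 : ¬ Even (2 * j + 1) := by simp [Nat.even_add_one, parity_simps]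
  have e1 : (2 * j + 1) / 2 = j := by omega
  simp [gRS, h1, e1]

lemma one_le_gRS (t : ℕ) : 1 ≤ gRS t := by
  unfold gRS; split
  · exact Nat.one_le_pow _ _ (by norm_num)
  · have := five_pow_pos (t / 2); omega

lemma gRS_mono : Monotone gRS := by
  apply monotone_nat_of_le_succ
  intro t
  rcases Nat.even_or_odd t with ⟨j, hj⟩ | ⟨j, hj⟩
  · have hj' : t = 2 * j := by omega
    subst hj'
    rw [gRS_even, gRS_odd]; omega
  · have hj' : t = 2 * j + 1 := by omega
    subst hj'
    have h2 : 2 * j + 1 + 1 = 2 * (j + 1) := by ring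
    rw [h2, gRS_even, gRS_odd, pow_succ]
    have := five_pow_pos j; omega

lemma gRS_double (t : ℕ) : 2 * gRS t ≤ gRS (t+1) := by
  rcases Nat.even_or_odd t with ⟨j, hj⟩ | ⟨j, hj⟩
  · have hj' : t = 2 * j := by omega
    subst hj'
    rw [gRS_even, gRS_odd]
  · have hj' : t = 2 * j + 1 := by omega
    subst hj'
    have h2 : 2 * j + 1 + 1 = 2 * (j + 1) := by ring
    rw [h2, gRS_even, gRS_odd, pow_succ]
    have := five_pow_pos j; omega

lemma gRS_five (t : ℕ) : 5 * gRS t ≤ gRS (t+2) := by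
  rcases Nat.even_or_odd t with ⟨j, hj⟩ | ⟨j, hj⟩
  · have hj' : t = 2 * j := by omega
    subst hj'
    have h2 : 2 * j + 2 = 2 * (j + 1) := by ring
    rw [h2, gRS_even, gRS_even, pow_succ]; omega
  · have hj' : t = 2 * j + 1 := by omega
    subst hj'
    have h2 : 2 * j + 1 + 2 = 2 * (j + 1) + 1 := by ring
    rw [h2, gRS_odd, gRS_odd, pow_succ]
    have := five_pow_pos j; omega

lemma gRS_mixed (t : ℕ) : gRS (t+1) + 2 * gRS t ≤ gRS (t+2) := by
  rcases Nat.even_or_odd t with ⟨j, hj⟩ | ⟨j, hj⟩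
  · have hj' : t = 2 * j := by omega
    subst hj'
    have h1 : 2 * j + 1 + 1 = 2 * (j + 1) := by ring
    have h2 : 2 * j + 2 = 2 * (j + 1) := by ring
    rw [h2, gRS_even, gRS_odd, gRS_even, pow_succ]
    have := five_pow_pos j; omega
  · have hj' : t = 2 * j + 1 := by omega
    subst hj'
    have h1 : 2 * j + 1 + 1 = 2 * (j + 1) := by ring
    have h2 : 2 * j + 1 + 2 = 2 * (j + 1) + 1 := by ring
    rw [h1, h2, gRS_even, gRS_odd, gRS_odd, pow_succ]
    have := five_pow_pos j; omega


section Comb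

variable {V C : Type*}

/-- symmetric coloring -/
def Symm (c : V → V → C) : Prop := ∀ x y, c x y = c y x

/-- no rainbow triangle within `s` -/
def GallaiOn (s : Finset V) (c : V → V → C) : Prop :=
  ∀ ⦃x⦄, x ∈ s → ∀ ⦃y⦄, y ∈ s → ∀ ⦃z⦄, z ∈ s → x ≠ y → x ≠ z → y ≠ z →
    (c x y = c x z ∨ c x y = c y z ∨ c x z = c y z)

/-- no monochromatic triangle within `s` -/
def NoMonoOn (s : Finset V) (c : V → V → C) : Prop :=
  ∀ ⦃x⦄, x ∈ s → ∀ ⦃y⦄, y ∈ s → ∀ ⦃z⦄, z ∈ s → x ≠ y → x ≠ z → y ≠ z →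
    ¬ (c x y = c y z ∧ c y z = c x z)

/-- `M` is a module of `s` : all external vertices see `M` monochromatically. -/
def IsModule (s M : Finset V) (c : V → V → C) : Prop :=
  M ⊆ s ∧ ∀ ⦃z⦄, z ∈ s → z ∉ M → ∀ ⦃x⦄, x ∈ M → ∀ ⦃y⦄, y ∈ M → c z x = c z y

/-- no nontrivial module -/
def PrimeOn (s : Finset V) (c : V → V → C) : Prop :=
  ∀ M : Finset V, IsModule s M c → 2 ≤ M.card → M.card < s.card → False

lemma GallaiOn.mono {s t : Finset V} {c : V → V → C} (h : GallaiOn t c) (hsub : s ⊆ t) :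
    GallaiOn s c := fun _ hx _ hy _ hz => h (hsub hx) (hsub hy) (hsub hz)

lemma NoMonoOn.mono {s t : Finset V} {c : V → V → C} (h : NoMonoOn t c) (hsub : s ⊆ t) :
    NoMonoOn s c := fun _ hx _ hy _ hz => h (hsub hx) (hsub hy) (hsub hz)

/-- Fact F consequence: in a prime Gallai coloring, if some edge has a color with
property `D`, then every vertex is incident to a `D`-edge. -/
lemma span {s : Finset V} {c : V → V → C} (hsym : Symm c) (hG : GallaiOn s c)
    (hprime : PrimeOn s c) (D : C → Prop) {x1 x2 : V} (h1 : x1 ∈ s) (h2 : x2 ∈ s)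
    (hne : x1 ≠ x2) (hD : D (c x1 x2)) :
    ∀ w ∈ s, ∃ z ∈ s, z ≠ w ∧ D (c w z) := by
  classical
  set R : V → V → Prop := fun x y => x ∈ s ∧ y ∈ s ∧ x ≠ y ∧ D (c x y) with hR
  set K : Finset V := s.filter (fun y => Relation.ReflTransGen R x1 y) with hK
  have hKsub : K ⊆ s := filter_subset _ _
  have hmemK : ∀ {u : V}, u ∈ K ↔ u ∈ s ∧ Relation.ReflTransGen R x1 u := by
    intro u; simp [hK]
  have hx1K : x1 ∈ K := hmemK.mpr ⟨h1, Relation.ReflTransGen.refl⟩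
  have hx2K : x2 ∈ K := hmemK.mpr ⟨h2, Relation.ReflTransGen.single ⟨h1, h2, hne, hD⟩⟩
  have hmod : IsModule s K c := by
    refine ⟨hKsub, ?_⟩
    intro z hz hzK x hx y hy
    have hnotD : ∀ u ∈ K, z ≠ u → ¬ D (c z u) := by
      intro u hu hzu hDu
      exact hzK (hmemK.mpr ⟨hz, ((hmemK.mp hu).2).tail
        ⟨(hmemK.mp hu).1, hz, hzu.symm, by rwa [hsym u z]⟩⟩)
    have key : ∀ u ∈ K, c z u = c z x1 := by
      intro u hu
      obtain ⟨hus, hpath⟩ := hmemK.mp hu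
      clear hu
      induction hpath with
      | refl => rfl
      | tail hp hstep ih =>
        rename_i b u'
        obtain ⟨hbs, hu's, hbu, hDbu⟩ := hstep
        have hbK : b ∈ K := hmemK.mpr ⟨hbs, hp⟩
        have hu'K : u' ∈ K := hmemK.mpr ⟨hu's, hp.tail ⟨hbs, hu's, hbu, hDbu⟩⟩
        have hzb : z ≠ b := fun h => hzK (h ▸ hbK)
        have hzu' : z ≠ u' := fun h => hzK (h ▸ hu'K)
        have htri := hG hz hbs hu's hzb hzu' hbu
        have h3 : c z u' = c z b := by
          rcases htri with h | h | h
          · exact h.symm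
          · exact absurd (h ▸ hDbu) (hnotD b hbK hzb)
          · exact absurd (h ▸ hDbu) (hnotD u' hu'K hzu')
        rw [h3, ih hbs]
    rw [key x hx, key y hy]
  have h2card : 2 ≤ K.card := by
    have := Finset.one_lt_card.mpr ⟨x1, hx1K, x2, hx2K, hne⟩
    omega
  have hKs : K = s := by
    have hnlt : ¬ K.card < s.card := fun h => hprime K hmod h2card h
    exact Finset.eq_of_subset_of_card_le hKsub (by omega)
  intro w hw
  have hwK : w ∈ K := hKs ▸ hw
  rcases ((hmemK.mp hwK).2).cases_tail with h | ⟨b, _, hstep⟩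
  · subst h
    exact ⟨x2, h2, fun hh => hne hh.symm, hD⟩
  · obtain ⟨hbs, hws, hbw, hDbw⟩ := hstep
    exact ⟨b, hbs, hbw, by rwa [hsym w b]⟩

end Comb


section XTrick

variable {V C : Type*} [DecidableEq V]

/-- the one-vertex extension trick: if `s.erase v` is 2-colored and `s` is prime,
then `s` is 2-colored with the same colors. -/
lemma extend_two {s : Finset V} {c : V → V → C} {v : V} {a b : C}
    (hsym : Symm c) (hG : GallaiOn s c) (hprime : PrimeOn s c) (hv : v ∈ s)
    (h3 : 3 ≤ s.card)
    (h2col : ∀ x ∈ s.erase v, ∀ y ∈ s.erase v, x ≠ y → c x y = a ∨ c x y = b) :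
    ∀ x ∈ s, ∀ y ∈ s, x ≠ y → c x y = a ∨ c x y = b := by
  classical
  set s' := s.erase v with hs'
  set X := s'.filter (fun y => ¬(c v y = a ∨ c v y = b)) with hXdef
  have hXsub : X ⊆ s' := filter_subset _ _
  have hXmem : ∀ {y : V}, y ∈ X ↔ y ∈ s' ∧ ¬(c v y = a ∨ c v y = b) := by
    intro y; simp [hXdef]
  have hs'card : s'.card = s.card - 1 := card_erase_of_mem hv
  by_cases hXe : X = ∅
  · have hv2 : ∀ y ∈ s', c v y = a ∨ c v y = b := by
      intro y hy
      by_contra h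
      exact absurd (hXmem.mpr ⟨hy, h⟩) (by simp [hXe])
    intro x hx y hy hxy
    by_cases hxv : x = v
    · subst hxv
      exact hv2 y (mem_erase.mpr ⟨fun h => hxy h.symm, hy⟩)
    · by_cases hyv : y = v
      · subst hyv
        rw [hsym]
        exact hv2 x (mem_erase.mpr ⟨hxv, hx⟩)
      · exact h2col x (mem_erase.mpr ⟨hxv, hx⟩) y (mem_erase.mpr ⟨hyv, hy⟩) hxy
  · have hXne : X.Nonempty := nonempty_iff_ne_empty.mpr hXe
    have hvX : v ∉ X := fun h => (mem_erase.mp (hXsub h)).1 rfl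
    have hvs' : ∀ {y : V}, y ∈ s' → y ≠ v := fun hy => (mem_erase.mp hy).1
    have hvmono : ∀ y ∈ X, ∀ y' ∈ X, c v y = c v y' := by
      intro y hy y' hy'
      by_cases h : y = y'
      · rw [h]
      · obtain ⟨hys', hyc⟩ := hXmem.mp hy
        obtain ⟨hy's', hy'c⟩ := hXmem.mp hy'
        have hedge := h2col y hys' y' hy's' h
        rcases hG hv (mem_of_mem_erase hys') (mem_of_mem_erase hy's')
            (Ne.symm (hvs' hys')) (Ne.symm (hvs' hy's')) h with hh | hh | hh
        · exact hh
        · exact absurd (hh ▸ hedge) hyc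
        · exact absurd (hh ▸ hedge) hy'c
    exfalso
    by_cases hXfull : s' ⊆ X
    · -- s' itself is a module
      have hXeq : X = s' := Finset.Subset.antisymm hXsub hXfull
      refine hprime s' ⟨erase_subset _ _, ?_⟩ (by omega) (by omega)
      intro z hz hzs' x hx y hy
      have hzv : z = v := by
        by_contra hzv
        exact hzs' (mem_erase.mpr ⟨hzv, hz⟩)
      subst hzv
      exact hvmono x (hXeq ▸ hx) y (hXeq ▸ hy)
    · obtain ⟨z, hzs', hzX⟩ := Finset.not_subset.mp hXfull
      have hMsub : insert v X ⊆ s := by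
        intro u hu
        rcases mem_insert.mp hu with h | h
        · exact h ▸ hv
        · exact mem_of_mem_erase (hXsub h)
      have hmono : ∀ z' ∈ s, z' ∉ insert v X → ∀ x ∈ insert v X, c z' x = c z' v := by
        intro z' hz' hz'M x hx
        have hz'v : z' ≠ v := fun h => hz'M (h ▸ mem_insert_self v X)
        have hz'X : z' ∉ X := fun h => hz'M (mem_insert_of_mem h)
        have hz's' : z' ∈ s' := mem_erase.mpr ⟨hz'v, hz'⟩
        rcases mem_insert.mp hx with h | h
        · rw [h]
        · -- x ∈ X
          obtain ⟨hxs', hxc⟩ := hXmem.mp h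
          have hz'col : c v z' = a ∨ c v z' = b := by
            by_contra hcon
            exact hz'X (hXmem.mpr ⟨hz's', hcon⟩)
          have hxz' : x ≠ z' := fun hh => hxc (hh ▸ hz'col |>.imp (by rw [hh]; exact fun t => t)
            (by rw [hh]; exact fun t => t))
          have hedge := h2col x hxs' z' hz's' hxz'
          rcases hG hv (mem_of_mem_erase hxs') hz' (Ne.symm (hvs' hxs')) (Ne.symm hz'v) hxz'
            with hh | hh | hh
          · exact absurd (hh ▸ hz'col) hxc
          · exact absurd (hh ▸ hedge) hxc
          · rw [hsym z' x, hsym z' v]; exact hh.symm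
      refine hprime (insert v X) ⟨hMsub, ?_⟩ ?_ ?_
      · intro z' hz' hz'M x hx y hy
        rw [hmono z' hz' hz'M x hx, hmono z' hz' hz'M y hy]
      · rw [card_insert_of_notMem hvX]
        have := hXne.card_pos
        omega
      · have hss : insert v X ⊂ s := by
          refine (Finset.ssubset_iff_of_subset hMsub).mpr ⟨z, mem_of_mem_erase hzs', ?_⟩
          intro hcon
          rcases mem_insert.mp hcon with h | h
          · exact (hvs' hzs') h
          · exact hzX h
        exact Finset.card_lt_card hss
end XTrick


section Stuck

variable {V C : Type*} [DecidableEq V]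

/-- If `s` is prime and Gallai but `s.erase v` has a nontrivial module,
then `s` is 2-colored. -/
lemma stuck {s M : Finset V} {c : V → V → C} {v : V}
    (hsym : Symm c) (hG : GallaiOn s c) (hprime : PrimeOn s c) (hv : v ∈ s)
    (hM : IsModule (s.erase v) M c) (h2 : 2 ≤ M.card) (h3 : M.card < (s.erase v).card) :
    ∃ p q : C, ∀ x ∈ s, ∀ y ∈ s, x ≠ y → c x y = p ∨ c x y = q := by
  classical
  obtain ⟨hMsub, hMmod⟩ := hM
  have hMs : M ⊆ s := hMsub.trans (erase_subset _ _)
  have hvM : v ∉ M := fun h => (mem_erase.mp (hMsub h)).1 rfl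
  have hecard : (s.erase v).card = s.card - 1 := card_erase_of_mem hv
  obtain ⟨y0, hy0⟩ := Finset.card_pos.mp (show 0 < M.card by omega)
  have hy0s : y0 ∈ s := hMs hy0
  have hy0v : y0 ≠ v := fun h => hvM (h ▸ hy0)
  -- external vertices (≠ v) see M monochromatically
  have eMono : ∀ ⦃z⦄, z ∈ s → z ≠ v → z ∉ M → ∀ ⦃y⦄, y ∈ M → c z y = c z y0 := by
    intro z hz hzv hzM y hy
    exact hMmod (mem_erase.mpr ⟨hzv, hz⟩) hzM hy hy0
  have hMv : ∀ ⦃y⦄, y ∈ M → y ≠ v := fun y hy h => hvM (h ▸ hy)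
  have hMO : ∀ ⦃y z⦄, y ∈ M → z ∉ M → y ≠ z := fun y z hy hz h => hz (h ▸ hy)
  -- Step 1 : v is not mono on M
  by_cases hvmono : ∀ y ∈ M, c v y = c v y0
  · exfalso
    refine hprime M ⟨hMs, ?_⟩ h2 (by omega)
    intro z hz hzM x hx y hy
    by_cases hzv : z = v
    · subst hzv; rw [hvmono x hx, hvmono y hy]
    · rw [eMono hz hzv hzM hx, eMono hz hzv hzM hy]
  push_neg at hvmono
  obtain ⟨yq, hyq, hyqne⟩ := hvmono
  -- Step 2 : some z outside M ∪ {v} has `c v z ≠ e z`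
  by_cases hZ : ∀ z ∈ s, z ≠ v → z ∉ M → c v z = c z y0
  · exfalso
    refine hprime (insert v M) ⟨?_, ?_⟩ ?_ ?_
    · intro u hu; rcases mem_insert.mp hu with h | h
      · exact h ▸ hv
      · exact hMs h
    · intro z hz hzM' x hx y hy
      have hzv : z ≠ v := fun h => hzM' (h ▸ mem_insert_self v M)
      have hzM : z ∉ M := fun h => hzM' (mem_insert_of_mem h)
      have hval : ∀ ⦃x⦄, x ∈ insert v M → c z x = c z y0 := by
        intro x hx
        rcases mem_insert.mp hx with h | h
        · rw [h, hsym z v, hZ z hz hzv hzM]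
        · exact eMono hz hzv hzM h
      rw [hval hx, hval hy]
    · rw [card_insert_of_notMem hvM]; omega
    · rw [card_insert_of_notMem hvM]; omega
  push_neg at hZ
  obtain ⟨z0, hz0s, hz0v, hz0M, hz0ne⟩ := hZ
  set p : C := c v z0 with hpdef
  set q : C := c z0 y0 with hqdef
  have hpq : p ≠ q := hz0ne
  -- palette of v on M is {p,q}
  have pal : ∀ ⦃y⦄, y ∈ M → c v y = p ∨ c v y = q := by
    intro y hy
    have hyz0 : y ≠ z0 := hMO hy hz0M
    have htri := hG hv (hMs hy) hz0s (Ne.symm (hMv hy)) (Ne.symm hz0v) hyz0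
    have hyz0e : c y z0 = q := by rw [hsym y z0]; exact eMono hz0s hz0v hz0M hy
    rcases htri with h | h | h
    · exact Or.inl h
    · right; rw [h, hyz0e]
    · exact absurd (h.trans hyz0e) hpq
  -- both palette values are attained on M
  have hsplit : (∃ y ∈ M, c v y = p) ∧ (∃ y ∈ M, c v y = q) := by
    rcases pal hy0 with h0 | h0 <;> rcases pal hyq with hq' | hq'
    · exact absurd (hq'.trans h0.symm) hyqne
    · exact ⟨⟨y0, hy0, h0⟩, ⟨yq, hyq, hq'⟩⟩
    · exact ⟨⟨yq, hyq, hq'⟩, ⟨y0, hy0, h0⟩⟩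
    · exact absurd (hq'.trans h0.symm) hyqne
  obtain ⟨⟨yp', hyp', hypp⟩, ⟨yq', hyq', hyqq⟩⟩ := hsplit
  -- trichotomy for outside vertices
  have tri : ∀ ⦃z⦄, z ∈ s → z ≠ v → z ∉ M →
      c v z = c z y0 ∨ (c v z = p ∧ c z y0 = q) ∨ (c v z = q ∧ c z y0 = p) := by
    intro z hz hzv hzM
    by_cases he : c v z = c z y0
    · exact Or.inl he
    have key : ∀ ⦃y⦄, y ∈ M → (c v y = c v z ∨ c v y = c z y0) := by
      intro y hy
      have hyz : y ≠ z := hMO hy hzM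
      have htri := hG hv (hMs hy) hz (Ne.symm (hMv hy)) (Ne.symm hzv) hyz
      have hyze : c y z = c z y0 := by rw [hsym y z]; exact eMono hz hzv hzM hy
      rcases htri with h | h | h
      · exact Or.inl h
      · right; rw [h, hyze]
      · exact absurd (h.trans hyze) he
    rcases key hyp' with h1 | h1 <;> rcases key hyq' with h2 | h2
    · exact absurd ((hypp.symm.trans h1).trans (hyqq.symm.trans h2).symm) hpq
    · right; left; exact ⟨(hypp.symm.trans h1).symm, (hyqq.symm.trans h2).symm⟩
    · right; right; exact ⟨(hyqq.symm.trans h2).symm, (hypp.symm.trans h1).symm⟩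
    · exact absurd ((hypp.symm.trans h1).trans (hyqq.symm.trans h2).symm) hpq
  -- main goal
  by_cases hall : ∀ x ∈ s, ∀ y ∈ s, x ≠ y → c x y = p ∨ c x y = q
  · exact ⟨p, q, hall⟩
  exfalso
  push_neg at hall
  obtain ⟨x1, hx1, x2, hx2, hx12, hx12p, hx12q⟩ := hall
  obtain ⟨zs, hzss, hzsv, hzsD⟩ :=
    span hsym hG hprime (fun γ => γ ≠ p ∧ γ ≠ q) hx1 hx2 hx12 ⟨hx12p, hx12q⟩ v hv
  rw [hsym v zs] at hzsD
  -- `zs` plays the role of z* ; its edge colors to M∪{v} are all `r ∉ {p,q}`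
  have hzsM : zs ∉ M := fun h => (pal h).elim (fun hh => hzsD.1 (by rwa [hsym zs v])) 
    (fun hh => hzsD.2 (by rwa [hsym zs v]))
  have hzsG : c v zs = c zs y0 := by
    rcases tri hzss hzsv hzsM with h | ⟨h, _⟩ | ⟨h, _⟩
    · exact h
    · exact absurd (by rwa [hsym zs v]) (fun hh => hzsD.1 hh)
    · exact absurd (by rwa [hsym zs v]) (fun hh => hzsD.2 hh)
  have hzsr : c zs y0 ≠ p ∧ c zs y0 ≠ q := by
    constructor
    · intro h; exact hzsD.1 (by rw [hsym zs v, hzsG, h])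
    · intro h; exact hzsD.2 (by rw [hsym zs v, hzsG, h])
  -- taint machinery
  set Zab : V → Prop := fun x => x ∈ s ∧ x ≠ v ∧ x ∉ M ∧
    ((c v x = p ∧ c x y0 = q) ∨ (c v x = q ∧ c x y0 = p)) with hZab
  set Q0 : V → Prop := fun x => x ∈ M ∨ x = v ∨ Zab x with hQ0
  set T : V → V → Prop := fun x z => z ∈ s ∧ z ≠ v ∧ z ∉ M ∧ x ≠ z ∧
    c v z = c z y0 ∧ (c z y0 = p ∨ c z y0 = q) ∧ c z x ≠ c z y0 ∧
    (c z x = p ∨ c z x = q) with hT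
  set Tainted : V → Prop := fun z => ∃ x, Q0 x ∧ Relation.TransGen T x z with hTainted
  set Qbar : Finset V := s.filter (fun x => Q0 x ∨ Tainted x) with hQbar
  -- basic facts about the taint relation
  have hTprop : ∀ ⦃x z : V⦄, Relation.TransGen T x z →
      z ∈ s ∧ z ≠ v ∧ z ∉ M ∧ c v z = c z y0 ∧ (c z y0 = p ∨ c z y0 = q) := by
    intro x z h
    have hlast : ∃ u, T u z := by
      cases h with
      | single h => exact ⟨_, h⟩
      | tail _ h => exact ⟨_, h⟩
    obtain ⟨u, hu⟩ := hlast
    simp only [hT] at hu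
    exact ⟨hu.1, hu.2.1, hu.2.2.1, hu.2.2.2.2.1, hu.2.2.2.2.2.1⟩
  have hQ0v : Q0 v := Or.inr (Or.inl rfl)
  have hQ0M : ∀ ⦃x⦄, x ∈ M → Q0 x := fun x hx => Or.inl hx
  have hQ0s : ∀ ⦃x⦄, Q0 x → x ∈ s := by
    intro x hx; simp only [hQ0, hZab] at hx
    rcases hx with h | rfl | h
    · exact hMs h
    · exact hv
    · exact h.1
  -- P1 base : exotic-colored outside vertices are mono on Q0
  have base1 : ∀ ⦃z'⦄, z' ∈ s → z' ≠ v → z' ∉ M → c v z' = c z' y0 →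
      c z' y0 ≠ p → c z' y0 ≠ q → ∀ ⦃x⦄, Q0 x → c z' x = c z' y0 := by
    intro z' hz's hz'v hz'M hz'G hz'p hz'q x hx
    simp only [hQ0] at hx
    rcases hx with hxM | hxv2 | hxZ
    · exact eMono hz's hz'v hz'M hxM
    · rw [hxv2, hsym z' v, hz'G]
    · simp only [hZab] at hxZ
      obtain ⟨hxs, hxv, hxM, hpat⟩ := hxZ
      have hz'x : z' ≠ x := by
        intro h
        subst h
        rcases hpat with ⟨h1, h2⟩ | ⟨h1, h2⟩
        · exact hz'q (hz'G ▸ h2)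
        · exact hz'p (hz'G ▸ h2)
      have hxy0 : x ≠ y0 := (hMO hy0 hxM).symm
      have hz'y0 : z' ≠ y0 := (hMO hy0 hz'M).symm
      have tri1 := hG hz's hxs hv hz'x hz'v hxv
      have tri2 := hG hz's hxs hy0s hz'x hz'y0 hxy0
      have hxv' : c x v = c v x := hsym x v
      have hz'v' : c z' v = c z' y0 := by rw [hsym z' v, hz'G]
      rcases hpat with ⟨h1, h2⟩ | ⟨h1, h2⟩
      · -- c v x = p, c x y0 = q
        rcases tri1 with hh | hh | hh
        · rw [hh, hz'v']
        · rw [hxv', h1] at hh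
          rcases tri2 with h3 | h3 | h3
          · rw [h3]
          · rw [h2] at h3; exact absurd (hh.symm.trans h3) hpq
          · rw [h2] at h3; exact absurd h3 hz'q
        · rw [hxv', h1, hz'v'] at hh; exact absurd hh hz'p
      · rcases tri1 with hh | hh | hh
        · rw [hh, hz'v']
        · rw [hxv', h1] at hh
          rcases tri2 with h3 | h3 | h3
          · rw [h3]
          · rw [h2] at h3; exact absurd (h3.symm.trans hh) hpq
          · rw [h2] at h3; exact absurd h3 hz'p
        · rw [hxv', h1, hz'v'] at hh; exact absurd hh hz'q
  -- P1 step
  have step1 : ∀ ⦃z'⦄, z' ∈ s → z' ≠ v → z' ∉ M → c v z' = c z' y0 →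
      c z' y0 ≠ p → c z' y0 ≠ q → ∀ ⦃x z1⦄, x ∈ s → T x z1 → z' ≠ x → c z' x = c z' y0 →
      c z' z1 = c z' y0 := by
    intro z' hz's hz'v hz'M hz'G hz'p hz'q x z1 hxs hT1 hz'x hpx
    simp only [hT] at hT1
    obtain ⟨hz1s, hz1v, hz1M, hxz1, hz1G, hz1pq, hfneq, hfpq⟩ := hT1
    have hz'z1 : z' ≠ z1 := by
      intro h; subst h
      rcases hz1pq with h | h
      · exact hz'p h
      · exact hz'q h
    have tri1 := hG hz's hz1s hv hz'z1 hz'v hz1v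
    have tri2 := hG hz's hz1s hxs hz'z1 hz'x (Ne.symm hxz1)
    have hz'v' : c z' v = c z' y0 := by rw [hsym z' v, hz'G]
    have hz1v' : c z1 v = c z1 y0 := by rw [hsym z1 v, hz1G]
    rcases tri1 with hh | hh | hh
    · rw [hh, hz'v']
    · rw [hz1v'] at hh
      rcases tri2 with h3 | h3 | h3
      · rw [h3, hpx]
      · exact absurd (h3.symm.trans hh) hfneq
      · rw [hpx] at h3
        rcases hfpq with hf | hf
        · exact absurd (h3.trans hf) hz'p
        · exact absurd (h3.trans hf) hz'q
    · rw [hz'v', hz1v'] at hh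
      rcases hz1pq with h | h
      · exact absurd (hh.trans h) hz'p
      · exact absurd (hh.trans h) hz'q
  -- P1 : full
  have P1 : ∀ ⦃z'⦄, z' ∈ s → z' ≠ v → z' ∉ M → c v z' = c z' y0 →
      c z' y0 ≠ p → c z' y0 ≠ q → ∀ ⦃x⦄, (Q0 x ∨ Tainted x) → c z' x = c z' y0 := by
    intro z' hz's hz'v hz'M hz'G hz'p hz'q x hx
    rcases hx with hx | hx
    · exact base1 hz's hz'v hz'M hz'G hz'p hz'q hx
    · simp only [hTainted] at hx
      obtain ⟨x0, hx0, hchain⟩ := hx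
      induction hchain with
      | single h =>
        have hz'x0 : z' ≠ x0 := by
          intro hh; subst hh
          simp only [hQ0, hZab] at hx0
          rcases hx0 with hc | hc | hc
          · exact hz'M hc
          · exact hz'v hc
          · rcases hc.2.2.2 with ⟨h1, h2⟩ | ⟨h1, h2⟩
            · exact hz'q (hz'G ▸ h2)
            · exact hz'p (hz'G ▸ h2)
        exact step1 hz's hz'v hz'M hz'G hz'p hz'q (hQ0s hx0) h hz'x0
          (base1 hz's hz'v hz'M hz'G hz'p hz'q hx0)
      | tail hc h ih =>
        rename_i b z1
        obtain ⟨hbs, hbv, hbM, hbG, hbpq⟩ := hTprop hc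
        have hz'b : z' ≠ b := by
          intro hh; subst hh
          rcases hbpq with hb | hb
          · exact hz'p hb
          · exact hz'q hb
        exact step1 hz's hz'v hz'M hz'G hz'p hz'q hbs h hz'b ih
  -- P2 : untainted pq-colored outside vertices are mono on Q0 ∪ Tainted
  have mkTaint : ∀ ⦃x z2⦄, (Q0 x ∨ Tainted x) → T x z2 → Tainted z2 := by
    intro x z2 hx ht
    rcases hx with hx | hx
    · exact ⟨x, hx, Relation.TransGen.single ht⟩
    · obtain ⟨x0, hx0, hchain⟩ := hx
      exact ⟨x0, hx0, hchain.tail ht⟩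
  have base2 : ∀ ⦃z2⦄, z2 ∈ s → z2 ≠ v → z2 ∉ M → c v z2 = c z2 y0 →
      (c z2 y0 = p ∨ c z2 y0 = q) → ¬ Tainted z2 → ∀ ⦃x⦄, Q0 x → c z2 x = c z2 y0 := by
    intro z2 hz2s hz2v hz2M hz2G hz2pq hz2nt x hx
    have hxQ := hx
    simp only [hQ0] at hx
    rcases hx with hxM | hxv2 | hxZ
    · exact eMono hz2s hz2v hz2M hxM
    · rw [hxv2, hsym z2 v, hz2G]
    · simp only [hZab] at hxZ
      obtain ⟨hxs, hxv, hxM, hpat⟩ := hxZ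
      have hz2x : z2 ≠ x := by
        intro h
        rw [h] at hz2G
        rcases hpat with ⟨h1, h2⟩ | ⟨h1, h2⟩
        · exact hpq ((h1.symm.trans hz2G).trans h2)
        · exact hpq (((h1.symm.trans hz2G).trans h2).symm)
      have hxy0 : x ≠ y0 := (hMO hy0 hxM).symm
      have hz2y0 : z2 ≠ y0 := (hMO hy0 hz2M).symm
      have tri1 := hG hz2s hxs hv hz2x hz2v hxv
      have tri2 := hG hz2s hxs hy0s hz2x hz2y0 hxy0
      have hxv' : c x v = c v x := hsym x v
      have hz2v' : c z2 v = c z2 y0 := by rw [hsym z2 v, hz2G]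
      -- if c z2 x ∈ {p,q} \ {e2} then z2 would be tainted
      have hnott : c z2 x ≠ c z2 y0 → (c z2 x = p ∨ c z2 x = q) → False := by
        intro hne hin
        refine hz2nt (mkTaint (Or.inl hxQ) ?_)
        simp only [hT]
        exact ⟨hz2s, hz2v, hz2M, fun hh => hz2x hh.symm, hz2G, hz2pq, hne, hin⟩
      by_cases hfin : c z2 x = c z2 y0
      · exact hfin
      · exfalso
        rcases hpat with ⟨h1, h2⟩ | ⟨h1, h2⟩
        · -- c v x = p, c x y0 = q
          rcases tri1 with hh | hh | hh
          · exact hfin (hh.trans hz2v')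
          · rw [hxv', h1] at hh
            exact hnott hfin (Or.inl hh)
          · rw [hxv', h1, hz2v'] at hh
            -- e2 = p ; use tri2
            rcases tri2 with h3 | h3 | h3
            · exact hfin h3
            · rw [h2] at h3
              exact hnott hfin (Or.inr h3)
            · rw [h2] at h3
              exact hpq (hh.symm.trans h3)
        · rcases tri1 with hh | hh | hh
          · exact hfin (hh.trans hz2v')
          · rw [hxv', h1] at hh
            exact hnott hfin (Or.inr hh)
          · rw [hxv', h1, hz2v'] at hh
            rcases tri2 with h3 | h3 | h3
            · exact hfin h3
            · rw [h2] at h3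
              exact hnott hfin (Or.inl h3)
            · rw [h2] at h3
              exact hpq (h3.symm.trans hh)
  have step2 : ∀ ⦃z2⦄, z2 ∈ s → z2 ≠ v → z2 ∉ M → c v z2 = c z2 y0 →
      (c z2 y0 = p ∨ c z2 y0 = q) → ¬ Tainted z2 →
      ∀ ⦃x z1⦄, x ∈ s → (Q0 x ∨ Tainted x) → Tainted z1 → T x z1 → z2 ≠ x →
      c z2 x = c z2 y0 → c z2 z1 = c z2 y0 := by
    intro z2 hz2s hz2v hz2M hz2G hz2pq hz2nt x z1 hxs hxQT hz1t hT1 hz2x hpx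
    simp only [hT] at hT1
    obtain ⟨hz1s, hz1v, hz1M, hxz1, hz1G, hz1pq, hfneq, hfpq⟩ := hT1
    have hz2z1 : z2 ≠ z1 := fun h => hz2nt (h ▸ hz1t)
    have tri1 := hG hz2s hz1s hv hz2z1 hz2v hz1v
    have tri2 := hG hz2s hz1s hxs hz2z1 hz2x (Ne.symm hxz1)
    have hz2v' : c z2 v = c z2 y0 := by rw [hsym z2 v, hz2G]
    have hz1v' : c z1 v = c z1 y0 := by rw [hsym z1 v, hz1G]
    have hnott : c z2 z1 ≠ c z2 y0 → (c z2 z1 = p ∨ c z2 z1 = q) → False := by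
      intro hne hin
      refine hz2nt (mkTaint (Or.inr hz1t) ?_)
      simp only [hT]
      exact ⟨hz2s, hz2v, hz2M, fun hh => hz2z1 hh.symm, hz2G, hz2pq, hne, hin⟩
    by_cases hfin : c z2 z1 = c z2 y0
    · exact hfin
    exfalso
    by_cases he : c z1 y0 = c z2 y0
    · -- same base color ; use the x-triangle
      rcases tri2 with h3 | h3 | h3
      · exact hfin (h3.trans hpx)
      · -- c z2 z1 = f
        rcases hfpq with hf | hf
        · exact hnott hfin (Or.inl (h3.trans hf))
        · exact hnott hfin (Or.inr (h3.trans hf))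
      · -- c z2 x = c z1 x : e2 = f
        rw [hpx] at h3
        exact hfneq (h3.symm.trans he.symm)
    · -- different base colors ; use the v-triangle
      rcases tri1 with hh | hh | hh
      · exact hfin (hh.trans hz2v')
      · rw [hz1v'] at hh
        rcases hz1pq with hf | hf
        · exact hnott hfin (Or.inl (hh.trans hf))
        · exact hnott hfin (Or.inr (hh.trans hf))
      · rw [hz2v', hz1v'] at hh
        exact he (hh.symm)
  have P2 : ∀ ⦃z2⦄, z2 ∈ s → z2 ≠ v → z2 ∉ M → c v z2 = c z2 y0 →
      (c z2 y0 = p ∨ c z2 y0 = q) → ¬ Tainted z2 →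
      ∀ ⦃x⦄, (Q0 x ∨ Tainted x) → c z2 x = c z2 y0 := by
    intro z2 hz2s hz2v hz2M hz2G hz2pq hz2nt x hx
    rcases hx with hx | hx
    · exact base2 hz2s hz2v hz2M hz2G hz2pq hz2nt hx
    · obtain ⟨x0, hx0, hchain⟩ := hx
      induction hchain with
      | single h =>
        have hz2x0 : z2 ≠ x0 := by
          intro hh
          simp only [hQ0, hZab] at hx0
          rw [← hh] at hx0
          rcases hx0 with hc | hc | hc
          · exact hz2M hc
          · exact hz2v hc
          · rcases hc.2.2.2 with ⟨h1, h2⟩ | ⟨h1, h2⟩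
            · exact hpq ((h1.symm.trans hz2G).trans h2)
            · exact hpq (((h1.symm.trans hz2G).trans h2).symm)
        exact step2 hz2s hz2v hz2M hz2G hz2pq hz2nt (hQ0s hx0) (Or.inl hx0)
          ⟨x0, hx0, Relation.TransGen.single h⟩ h hz2x0
          (base2 hz2s hz2v hz2M hz2G hz2pq hz2nt hx0)
      | tail hc h ih =>
        rename_i b z1
        obtain ⟨hbs, hbv, hbM, hbG, hbpq⟩ := hTprop hc
        have hbt : Tainted b := ⟨x0, hx0, hc⟩
        have hz2b : z2 ≠ b := fun hh => hz2nt (hh ▸ hbt)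
        exact step2 hz2s hz2v hz2M hz2G hz2pq hz2nt hbs (Or.inr hbt)
          ⟨x0, hx0, hc.tail h⟩ h hz2b ih
  -- Qbar is a nontrivial module : contradiction with primality
  have hQbarsub : Qbar ⊆ s := filter_subset _ _
  have hQbarmem : ∀ {x : V}, x ∈ Qbar ↔ x ∈ s ∧ (Q0 x ∨ Tainted x) := by
    intro x; simp [hQbar]
  refine hprime Qbar ⟨hQbarsub, ?_⟩ ?_ ?_
  · -- module property
    intro z2 hz2s hz2Q x hx y hy
    have hz2v : z2 ≠ v := fun h => hz2Q (hQbarmem.mpr ⟨hz2s, Or.inl (h ▸ hQ0v)⟩)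
    have hz2M : z2 ∉ M := fun h => hz2Q (hQbarmem.mpr ⟨hz2s, Or.inl (hQ0M h)⟩)
    have hz2nZ : ¬ Zab z2 := fun h => hz2Q (hQbarmem.mpr ⟨hz2s, Or.inl (by
      simp only [hQ0]; exact Or.inr (Or.inr h))⟩)
    have hz2nt : ¬ Tainted z2 := fun h => hz2Q (hQbarmem.mpr ⟨hz2s, Or.inr h⟩)
    have hz2G : c v z2 = c z2 y0 := by
      rcases tri hz2s hz2v hz2M with h | hpat | hpat
      · exact h
      · exact absurd (by simp only [hZab]; exact ⟨hz2s, hz2v, hz2M, Or.inl hpat⟩) hz2nZ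
      · exact absurd (by simp only [hZab]; exact ⟨hz2s, hz2v, hz2M, Or.inr hpat⟩) hz2nZ
    have hxQT := (hQbarmem.mp hx).2
    have hyQT := (hQbarmem.mp hy).2
    by_cases hz2pq : c z2 y0 = p ∨ c z2 y0 = q
    · rw [P2 hz2s hz2v hz2M hz2G hz2pq hz2nt hxQT,
          P2 hz2s hz2v hz2M hz2G hz2pq hz2nt hyQT]
    · push_neg at hz2pq
      rw [P1 hz2s hz2v hz2M hz2G hz2pq.1 hz2pq.2 hxQT,
          P1 hz2s hz2v hz2M hz2G hz2pq.1 hz2pq.2 hyQT]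
  · -- card ≥ 2
    have hMQ : M ⊆ Qbar := fun x hx => hQbarmem.mpr ⟨hMs hx, Or.inl (hQ0M hx)⟩
    calc 2 ≤ M.card := h2
    _ ≤ Qbar.card := card_le_card hMQ
  · -- proper : zs is outside
    have hzsQ : zs ∉ Qbar := by
      intro hcon
      rcases (hQbarmem.mp hcon).2 with h | h
      · simp only [hQ0, hZab] at h
        rcases h with h | h | h
        · exact hzsM h
        · exact hzsv h
        · rcases h.2.2.2 with ⟨_, h2⟩ | ⟨_, h2⟩
          · exact hzsr.2 h2
          · exact hzsr.1 h2
      · obtain ⟨x0, _, hchain⟩ := h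
        rcases (hTprop hchain).2.2.2.2 with h | h
        · exact hzsr.1 h
        · exact hzsr.2 h
    exact card_lt_card ((Finset.ssubset_iff_of_subset hQbarsub).mpr ⟨zs, hzss, hzsQ⟩)


end Stuck


section KL2

variable {V C : Type*} [DecidableEq V]

/-- Gallai's key lemma: a prime Gallai coloring uses at most two colors. -/
lemma prime_two_aux [Nonempty C] :
    ∀ (n : ℕ) (s : Finset V) (c : V → V → C), s.card = n →
    Symm c → GallaiOn s c → PrimeOn s c →
    ∃ a b : C, ∀ x ∈ s, ∀ y ∈ s, x ≠ y → c x y = a ∨ c x y = b := by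
  classical
  intro n
  induction n using Nat.strong_induction_on with
  | _ n ih =>
  intro s c hn hsym hG hprime
  by_cases hsmall : s.card ≤ 2
  · rcases Nat.lt_or_ge s.card 2 with hlt | hge
    · refine ⟨Classical.arbitrary C, Classical.arbitrary C, ?_⟩
      intro x hx y hy hxy
      exact absurd (Finset.one_lt_card.mpr ⟨x, hx, y, hy, hxy⟩) (by omega)
    · have h2 : s.card = 2 := by omega
      obtain ⟨x, y, hxy, hs⟩ := Finset.card_eq_two.mp h2
      refine ⟨c x y, c x y, ?_⟩
      intro u hu w hw huw
      rw [hs, mem_insert, mem_singleton] at hu hw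
      rcases hu with rfl | rfl <;> rcases hw with rfl | rfl
      · exact absurd rfl huw
      · exact Or.inl rfl
      · exact Or.inl (hsym u w)
      · exact absurd rfl huw
  · by_cases h3 : s.card = 3
    · obtain ⟨x, y, z, hxy, hxz, hyz, hs⟩ := Finset.card_eq_three.mp h3
      have hxs : x ∈ s := by rw [hs]; simp
      have hys : y ∈ s := by rw [hs]; simp
      have hzs : z ∈ s := by rw [hs]; simp
      have cover : ∀ a b : C, (c x y = a ∨ c x y = b) → (c x z = a ∨ c x z = b) →
          (c y z = a ∨ c y z = b) →
          ∀ u ∈ s, ∀ w ∈ s, u ≠ w → c u w = a ∨ c u w = b := by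
        intro a b h1 h2' h3'
        intro u hu w hw huw
        rw [hs, mem_insert, mem_insert, mem_singleton] at hu hw
        rcases hu with rfl | rfl | rfl <;> rcases hw with rfl | rfl | rfl <;>
          first
            | exact absurd rfl huw
            | assumption
            | (rw [hsym]; assumption)
      rcases hG hxs hys hzs hxy hxz hyz with h | h | h
      · exact ⟨c x y, c y z, cover _ _ (Or.inl rfl) (Or.inl h.symm) (Or.inr rfl)⟩
      · exact ⟨c x y, c x z, cover _ _ (Or.inl rfl) (Or.inr rfl) (Or.inl h.symm)⟩
      · exact ⟨c x y, c x z, cover _ _ (Or.inl rfl) (Or.inr rfl) (Or.inr h.symm)⟩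
    · -- main case : |s| ≥ 4
      have h4 : 4 ≤ s.card := by omega
      obtain ⟨v, hv⟩ := Finset.card_pos.mp (show 0 < s.card by omega)
      have hecard : (s.erase v).card = s.card - 1 := card_erase_of_mem hv
      by_cases hp' : PrimeOn (s.erase v) c
      · obtain ⟨a, b, h2col⟩ := ih (s.card - 1) (by omega) (s.erase v) c (by omega)
          hsym (hG.mono (erase_subset _ _)) hp'
        exact ⟨a, b, extend_two hsym hG hprime hv (by omega) h2col⟩
      · unfold PrimeOn at hp'
        push_neg at hp'
        obtain ⟨M, hmod, h2, h3'⟩ := hp'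
        exact stuck hsym hG hprime hv hmod h2 h3'.1

/-- The Gallai partition theorem, with the partition encoded by a
representative-choosing map. -/
lemma gallai_partition [Nonempty C] :
    ∀ (n : ℕ) (s : Finset V) (c : V → V → C), s.card = n →
    Symm c → GallaiOn s c → 2 ≤ s.card →
    ∃ (P : V → V) (a b : C),
      (∀ x ∈ s, P x ∈ s) ∧ (∀ x ∈ s, P (P x) = P x) ∧
      (∃ x ∈ s, ∃ y ∈ s, P x ≠ P y) ∧
      (∀ x ∈ s, ∀ y ∈ s, P x ≠ P y → c x y = c (P x) (P y)) ∧
      (∀ x ∈ s, ∀ y ∈ s, P x ≠ P y → (c (P x) (P y) = a ∨ c (P x) (P y) = b)) := by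
  classical
  intro n
  induction n using Nat.strong_induction_on with
  | _ n ih =>
  intro s c hn hsym hG h2
  by_cases hprime : PrimeOn s c
  · obtain ⟨a, b, h2col⟩ := prime_two_aux n s c hn hsym hG hprime
    obtain ⟨x, hx, y, hy, hxy⟩ := Finset.one_lt_card.mp (show 1 < s.card by omega)
    exact ⟨id, a, b, fun x hx => hx, fun x _ => rfl, ⟨x, hx, y, hy, hxy⟩,
      fun _ _ _ _ _ => rfl, fun x hx y hy hxy => h2col x hx y hy hxy⟩
  · unfold PrimeOn at hprime
    push_neg at hprime
    obtain ⟨M, ⟨hMs, hMmod⟩, hM2, hMlt⟩ := hprime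
    obtain ⟨y0, hy0⟩ := Finset.card_pos.mp (show 0 < M.card by omega)
    set st : Finset V := insert y0 (s \ M) with hst
    have hsts : st ⊆ s := by
      intro u hu
      rcases mem_insert.mp hu with rfl | hu
      · exact hMs hy0
      · exact (mem_sdiff.mp hu).1
    have hy0st : y0 ∈ st := mem_insert_self _ _
    have hstM : ∀ ⦃u⦄, u ∈ st → u ∈ M → u = y0 := by
      intro u hu huM
      rcases mem_insert.mp hu with rfl | hu
      · rfl
      · exact absurd huM (mem_sdiff.mp hu).2
    have hy0sd : y0 ∉ s \ M := fun h => (mem_sdiff.mp h).2 hy0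
    have hstcard : st.card = s.card - M.card + 1 := by
      rw [hst, card_insert_of_notMem hy0sd, card_sdiff_of_subset hMs]
    have hMcs : M.card ≤ s.card := card_le_card hMs
    obtain ⟨Ps, a, b, hi, hii, hiii, hiv, hvv⟩ := ih st.card (by omega) st c rfl
      hsym (hG.mono hsts) (by omega)
    set P : V → V := fun x => if x ∈ M then Ps y0 else Ps x with hP
    have hPeq : ∀ ⦃u⦄, u ∈ st → P u = Ps u := by
      intro u hu
      by_cases huM : u ∈ M
      · have := hstM hu huM
        subst this
        simp [hP]
      · simp [hP, huM]
    have hPval : ∀ ⦃x⦄, x ∈ s → ∃ x' ∈ st, P x = Ps x' ∧ (x ∉ M → x' = x) ∧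
        (x ∈ M → x' = y0) := by
      intro x hx
      by_cases hxM : x ∈ M
      · exact ⟨y0, hy0st, by simp [hP, hxM], fun h => absurd hxM h, fun _ => rfl⟩
      · exact ⟨x, mem_insert_of_mem (mem_sdiff.mpr ⟨hx, hxM⟩), by simp [hP, hxM],
          fun _ => rfl, fun h => absurd h hxM⟩
    refine ⟨P, a, b, ?_, ?_, ?_, ?_, ?_⟩
    · intro x hx
      obtain ⟨x', hx', hPx, _, _⟩ := hPval hx
      rw [hPx]
      exact hsts (hi x' hx')
    · intro x hx
      obtain ⟨x', hx', hPx, _, _⟩ := hPval hx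
      rw [hPx, hPeq (hi x' hx'), hii x' hx']
    · obtain ⟨x', hx', y', hy', hne⟩ := hiii
      exact ⟨x', hsts hx', y', hsts hy', by
        rw [hPeq hx', hPeq hy']; exact hne⟩
    · intro x hx y hy hne
      obtain ⟨x', hx', hPx, hxn, hxm⟩ := hPval hx
      obtain ⟨y', hy', hPy, hyn, hym⟩ := hPval hy
      rw [hPx, hPy] at hne ⊢
      by_cases hxM : x ∈ M <;> by_cases hyM : y ∈ M
      · rw [hxm hxM, hym hyM] at hne; exact absurd rfl hne
      · rw [hxm hxM] at hne ⊢
        rw [hyn hyM] at hne hy' ⊢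
        have e1 : c x y = c y0 y := by
          rw [hsym x y, hsym y0 y]
          exact hMmod hy hyM hxM hy0
        rw [e1]
        exact hiv y0 hy0st y hy' hne
      · rw [hym hyM] at hne ⊢
        rw [hxn hxM] at hne hx' ⊢
        have e1 : c x y = c x y0 := hMmod hx hxM hyM hy0
        rw [e1]
        exact hiv x hx' y0 hy0st hne
      · rw [hxn hxM] at hne hx' ⊢
        rw [hyn hyM] at hne hy' ⊢
        exact hiv x hx' y hy' hne
    · intro x hx y hy hne
      obtain ⟨x', hx', hPx, _, _⟩ := hPval hx
      obtain ⟨y', hy', hPy, _, _⟩ := hPval hy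
      rw [hPx, hPy] at hne ⊢
      exact hvv x' hx' y' hy' hne

end KL2


section Bound

variable {V C : Type*} [DecidableEq V] [DecidableEq C]

lemma two_col_card_le_five {s : Finset V} {c : V → V → C} {a b : C}
    (hsym : Symm c) (hNM : NoMonoOn s c)
    (h2col : ∀ x ∈ s, ∀ y ∈ s, x ≠ y → c x y = a ∨ c x y = b) :
    s.card ≤ 5 := by
  classical
  by_contra hcon
  push_neg at hcon
  obtain ⟨x0, hx0⟩ := Finset.card_pos.mp (show 0 < s.card by omega)
  set s5 := s.erase x0 with hs5
  have hs5card : 5 ≤ s5.card := by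
    rw [hs5, card_erase_of_mem hx0]; omega
  have hs5sub : s5 ⊆ s := erase_subset _ _
  set Fa := s5.filter (fun y => c x0 y = a) with hFa
  set Fb := s5.filter (fun y => c x0 y = b) with hFb
  have hcover : s5 ⊆ Fa ∪ Fb := by
    intro y hy
    have hyx0 : x0 ≠ y := fun h => (mem_erase.mp hy).1 h.symm
    rcases h2col x0 hx0 y (hs5sub hy) hyx0 with h | h
    · exact mem_union_left _ (mem_filter.mpr ⟨hy, h⟩)
    · exact mem_union_right _ (mem_filter.mpr ⟨hy, h⟩)
  have hcards : 5 ≤ Fa.card + Fb.card :=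
    le_trans hs5card (le_trans (card_le_card hcover) (card_union_le _ _))
  have inner : ∀ (γ δ : C) (F : Finset V), F ⊆ s5 → 3 ≤ F.card →
      (∀ y ∈ F, c x0 y = γ) →
      (∀ u ∈ s, ∀ w ∈ s, u ≠ w → c u w = γ ∨ c u w = δ) → False := by
    intro γ δ F hFsub hF3 hFcol hcol'
    obtain ⟨G, hGF, hG3⟩ := Finset.exists_subset_card_eq hF3
    obtain ⟨y1, y2, y3, h12, h13, h23, hGeq⟩ := Finset.card_eq_three.mp hG3
    have hy1F : y1 ∈ F := hGF (by rw [hGeq]; simp)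
    have hy2F : y2 ∈ F := hGF (by rw [hGeq]; simp)
    have hy3F : y3 ∈ F := hGF (by rw [hGeq]; simp)
    have hy1s : y1 ∈ s := hs5sub (hFsub hy1F)
    have hy2s : y2 ∈ s := hs5sub (hFsub hy2F)
    have hy3s : y3 ∈ s := hs5sub (hFsub hy3F)
    have hne : ∀ ⦃y⦄, y ∈ F → x0 ≠ y := fun y hy h =>
      (mem_erase.mp (hFsub hy)).1 h.symm
    have hedge : ∀ ⦃u w⦄, u ∈ F → w ∈ F → u ≠ w → c u w = δ := by
      intro u w hu hw huw
      rcases hcol' u (hs5sub (hFsub hu)) w (hs5sub (hFsub hw)) huw with h | h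
      · exact absurd ⟨(hFcol u hu).trans h.symm, h.trans ((hFcol w hw).symm)⟩
          (hNM hx0 (hs5sub (hFsub hu)) (hs5sub (hFsub hw)) (hne hu) (hne hw) huw)
      · exact h
    exact hNM hy1s hy2s hy3s h12 h13 h23
      ⟨(hedge hy1F hy2F h12).trans (hedge hy2F hy3F h23).symm,
       (hedge hy2F hy3F h23).trans (hedge hy1F hy3F h13).symm⟩
  have hcolba : ∀ u ∈ s, ∀ w ∈ s, u ≠ w → c u w = b ∨ c u w = a := by
    intro u hu w hw huw
    exact (h2col u hu w hw huw).symm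
  rcases Nat.lt_or_ge Fa.card 3 with h | h
  swap
  · exact inner a b Fa (filter_subset _ _) h (fun y hy => (mem_filter.mp hy).2) h2col
  · have hb3 : 3 ≤ Fb.card := by omega
    exact inner b a Fb (filter_subset _ _) hb3 (fun y hy => (mem_filter.mp hy).2) hcolba

/-- The main counting bound : a Gallai coloring of `K_s` with no monochromatic
triangle and all colors in `T` has at most `gRS T.card` vertices. -/
lemma gallai_bound [Nonempty C] :
    ∀ (t : ℕ) (T : Finset C) (s : Finset V) (c : V → V → C), T.card = t →
    Symm c → GallaiOn s c → NoMonoOn s c →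
    (∀ x ∈ s, ∀ y ∈ s, x ≠ y → c x y ∈ T) → s.card ≤ gRS t := by
  classical
  intro t
  induction t using Nat.strong_induction_on with
  | _ t ih =>
  intro T s c hT hsym hG hNM hTcol
  by_cases hs2 : s.card ≤ 1
  · exact le_trans hs2 (one_le_gRS t)
  push_neg at hs2
  obtain ⟨P, a, b, hi, hii, hiii, hiv, hvv⟩ :=
    gallai_partition s.card s c rfl hsym hG (by omega)
  set reps := s.image P with hreps
  have hrs : reps ⊆ s := by
    intro w hw
    obtain ⟨x, hx, rfl⟩ := mem_image.mp hw
    exact hi x hx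
  have hPfix : ∀ ⦃w⦄, w ∈ reps → P w = w := by
    intro w hw
    obtain ⟨x, hx, rfl⟩ := mem_image.mp hw
    exact hii x hx
  have hm2 : 2 ≤ reps.card := by
    obtain ⟨x, hx, y, hy, hxy⟩ := hiii
    have h1 : 1 < reps.card := Finset.one_lt_card.mpr ⟨P x, mem_image_of_mem P hx, P y,
      mem_image_of_mem P hy, hxy⟩
    omega
  have hrep2 : ∀ w ∈ reps, ∀ w' ∈ reps, w ≠ w' → c w w' = a ∨ c w w' = b := by
    intro w hw w' hw' hne
    have hPne : P w ≠ P w' := by rw [hPfix hw, hPfix hw']; exact hne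
    have := hvv w (hrs hw) w' (hrs hw') hPne
    rwa [hPfix hw, hPfix hw'] at this
  have hm5 : reps.card ≤ 5 :=
    two_col_card_le_five hsym (hNM.mono hrs) hrep2
  set A : V → Finset V := fun w => s.filter (fun x => P x = w) with hA
  have hAsub : ∀ w, A w ⊆ s := fun w => filter_subset _ _
  have hsum : s.card = ∑ w ∈ reps, (A w).card :=
    card_eq_sum_card_fiberwise (fun x hx => mem_image_of_mem P hx)
  -- cross edges from a fiber to another representative
  have hcross : ∀ ⦃w⦄, w ∈ reps → ∀ ⦃x⦄, x ∈ A w → ∀ ⦃w'⦄, w' ∈ reps → w' ≠ w →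
      x ≠ w' ∧ c x w' = c w w' := by
    intro w hw x hx w' hw' hne
    obtain ⟨hxs, hPx⟩ := mem_filter.mp hx
    have hPne : P x ≠ P w' := by rw [hPx, hPfix hw']; exact fun h => hne h.symm
    have hxw' : x ≠ w' := fun h => hPne (h ▸ rfl)
    have := hiv x hxs w' (hrs hw') hPne
    rw [hPx, hPfix hw'] at this
    exact ⟨hxw', this⟩
  -- internal fiber edges avoid all cross colors
  have havoid : ∀ ⦃w⦄, w ∈ reps → ∀ ⦃x⦄, x ∈ A w → ∀ ⦃y⦄, y ∈ A w → x ≠ y →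
      ∀ ⦃w'⦄, w' ∈ reps → w' ≠ w → c x y ≠ c w w' := by
    intro w hw x hx y hy hxy w' hw' hne heq
    obtain ⟨hxw', hxc⟩ := hcross hw hx hw' hne
    obtain ⟨hyw', hyc⟩ := hcross hw hy hw' hne
    exact hNM ((hAsub w) hx) ((hAsub w) hy) (hrs hw') hxy hxw' hyw'
      ⟨heq.trans hyc.symm, hyc.trans hxc.symm⟩
  have htne : ∀ ⦃w⦄, w ∈ reps → (reps.erase w).Nonempty := by
    intro w hw
    rw [← Finset.card_pos, card_erase_of_mem hw]
    omega
  have hcT : ∀ ⦃w⦄, w ∈ reps → ∀ ⦃w'⦄, w' ∈ reps → w ≠ w' → c w w' ∈ T := by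
    intro w hw w' hw' hne
    exact hTcol w (hrs hw) w' (hrs hw') hne
  have ht1 : 1 ≤ t := by
    obtain ⟨w, hw⟩ := Finset.card_pos.mp (show 0 < reps.card by omega)
    obtain ⟨w', hw'⟩ := htne hw
    have := hcT hw (mem_of_mem_erase hw') (fun h => (mem_erase.mp hw').1 h.symm)
    have := Finset.card_pos.mpr ⟨_, this⟩
    omega
  -- generic fiber bound
  have bnd1 : ∀ ⦃w⦄, w ∈ reps → (A w).card ≤ gRS (t - 1) := by
    intro w hw
    obtain ⟨w1, hw1⟩ := htne hw
    have hw1r : w1 ∈ reps := mem_of_mem_erase hw1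
    have hw1w : w1 ≠ w := (mem_erase.mp hw1).1
    set T' := T.erase (c w w1) with hT'
    have hT'card : T'.card = t - 1 := by
      rw [hT', card_erase_of_mem (hcT hw hw1r (fun h => hw1w h.symm))]
      omega
    have := ih (t - 1) (by omega) T' (A w) c hT'card hsym (hG.mono (hAsub w))
      (hNM.mono (hAsub w)) ?_
    · exact this
    · intro x hx y hy hxy
      rw [hT', mem_erase]
      exact ⟨havoid hw hx hy hxy hw1r hw1w, hTcol x ((hAsub w) hx) y ((hAsub w) hy) hxy⟩
  -- refined fiber bound if w sees two distinct colors
  set onec : V → Prop := fun w =>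
    ∀ w' ∈ reps.erase w, ∀ w'' ∈ reps.erase w, c w w' = c w w'' with honec
  have bnd2 : ∀ ⦃w⦄, w ∈ reps → ¬ onec w → (A w).card ≤ gRS (t - 2) := by
    intro w hw hnoc
    simp only [honec] at hnoc
    push_neg at hnoc
    obtain ⟨w1, hw1, w2, hw2, hne12⟩ := hnoc
    have hw1r : w1 ∈ reps := mem_of_mem_erase hw1
    have hw2r : w2 ∈ reps := mem_of_mem_erase hw2
    have hw1w : w1 ≠ w := (mem_erase.mp hw1).1
    have hw2w : w2 ≠ w := (mem_erase.mp hw2).1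
    set T' := (T.erase (c w w1)).erase (c w w2) with hT'
    have hT'card : T'.card = t - 2 := by
      rw [hT', card_erase_of_mem, card_erase_of_mem (hcT hw hw1r (fun h => hw1w h.symm))]
      · omega
      · exact mem_erase.mpr ⟨hne12.symm, hcT hw hw2r (fun h => hw2w h.symm)⟩
    have ht2 : 2 ≤ t := by
      have := Finset.one_lt_card.mpr ⟨c w w1, hcT hw hw1r (fun h => hw1w h.symm),
        c w w2, hcT hw hw2r (fun h => hw2w h.symm), hne12⟩
      omega
    have := ih (t - 2) (by omega) T' (A w) c hT'card hsym (hG.mono (hAsub w))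
      (hNM.mono (hAsub w)) ?_
    · exact this
    · intro x hx y hy hxy
      rw [hT', mem_erase, mem_erase]
      exact ⟨havoid hw hx hy hxy hw2r hw2w,
        havoid hw hx hy hxy hw1r hw1w, hTcol x ((hAsub w) hx) y ((hAsub w) hy) hxy⟩
  -- at most one one-colored representative when there are ≥ 3 parts
  have claim_one : 3 ≤ reps.card → ∀ ⦃w1⦄, w1 ∈ reps → ∀ ⦃w2⦄, w2 ∈ reps → w1 ≠ w2 →
      onec w1 → onec w2 → False := by
    intro h3 w1 hw1 w2 hw2 hne12 hc1 hc2
    have hne : ((reps.erase w1).erase w2).Nonempty := by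
      rw [← Finset.card_pos, card_erase_of_mem (mem_erase.mpr ⟨hne12.symm, hw2⟩),
        card_erase_of_mem hw1]
      omega
    obtain ⟨w3, hw3⟩ := hne
    have hw3r : w3 ∈ reps := mem_of_mem_erase (mem_of_mem_erase hw3)
    have h31 : w3 ≠ w1 := (mem_erase.mp (mem_of_mem_erase hw3)).1
    have h32 : w3 ≠ w2 := (mem_erase.mp hw3).1
    have e1 : c w1 w3 = c w1 w2 :=
      hc1 w3 (mem_erase.mpr ⟨h31, hw3r⟩) w2 (mem_erase.mpr ⟨hne12.symm, hw2⟩)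
    have e2 : c w2 w3 = c w2 w1 :=
      hc2 w3 (mem_erase.mpr ⟨h32, hw3r⟩) w1 (mem_erase.mpr ⟨hne12, hw1⟩)
    refine hNM (hrs hw1) (hrs hw2) (hrs hw3r) hne12 (fun h => h31 h.symm)
      (fun h => h32 h.symm) ⟨?_, ?_⟩
    · rw [e2, hsym w2 w1]
    · rw [e2, hsym w2 w1, ← e1]
  -- if ≥ 4 parts, no representative is one-colored
  have claim_none : 4 ≤ reps.card → ∀ ⦃w⦄, w ∈ reps → ¬ onec w := by
    intro h4 w hw hc
    have hcard3 : 3 ≤ (reps.erase w).card := by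
      rw [card_erase_of_mem hw]; omega
    obtain ⟨G, hGsub, hG3⟩ := Finset.exists_subset_card_eq hcard3
    obtain ⟨y1, y2, y3, h12, h13, h23, hGeq⟩ := Finset.card_eq_three.mp hG3
    have hy1 : y1 ∈ reps.erase w := hGsub (by rw [hGeq]; simp)
    have hy2 : y2 ∈ reps.erase w := hGsub (by rw [hGeq]; simp)
    have hy3 : y3 ∈ reps.erase w := hGsub (by rw [hGeq]; simp)
    have hy1r : y1 ∈ reps := mem_of_mem_erase hy1
    have hy2r : y2 ∈ reps := mem_of_mem_erase hy2
    have hy3r : y3 ∈ reps := mem_of_mem_erase hy3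
    have e12 : c w y2 = c w y1 := hc y2 hy2 y1 hy1
    have e13 : c w y3 = c w y1 := hc y3 hy3 y1 hy1
    have hwsz : ∀ ⦃u v'⦄, u ∈ reps.erase w → v' ∈ reps.erase w → u ≠ v' →
        c w u = c w y1 → c w v' = c w y1 → c u v' ≠ c w y1 := by
      intro u v' hu hv' huv' hcu hcv' heq
      exact hNM (hrs hw) (hrs (mem_of_mem_erase hu)) (hrs (mem_of_mem_erase hv'))
        (fun h => (mem_erase.mp hu).1 h.symm) (fun h => (mem_erase.mp hv').1 h.symm)
        huv' ⟨hcu.trans heq.symm, heq.trans hcv'.symm⟩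
    have d12 : c y1 y2 ≠ c w y1 := hwsz hy1 hy2 h12 rfl e12
    have d13 : c y1 y3 ≠ c w y1 := hwsz hy1 hy3 h13 rfl e13
    have d23 : c y2 y3 ≠ c w y1 := hwsz hy2 hy3 h23 e12 e13
    have hwy1 : w ≠ y1 := fun h => (mem_erase.mp hy1).1 h.symm
    have hγ : c w y1 = a ∨ c w y1 = b := hrep2 w hw y1 hy1r hwy1
    have f12 : c y1 y2 = a ∨ c y1 y2 = b := hrep2 y1 hy1r y2 hy2r h12
    have f13 : c y1 y3 = a ∨ c y1 y3 = b := hrep2 y1 hy1r y3 hy3r h13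
    have f23 : c y2 y3 = a ∨ c y2 y3 = b := hrep2 y2 hy2r y3 hy3r h23
    have other : ∀ x' : C, (x' = a ∨ x' = b) → x' ≠ c w y1 →
        ∀ y' : C, (y' = a ∨ y' = b) → y' ≠ c w y1 → x' = y' := by
      intro x' hx' hxne y' hy' hyne
      rcases hγ with rfl | rfl
      · rcases hx' with rfl | rfl
        · exact absurd rfl hxne
        · rcases hy' with rfl | rfl
          · exact absurd rfl hyne
          · rfl
      · rcases hx' with rfl | rfl
        · rcases hy' with rfl | rfl
          · rfl
          · exact absurd rfl hyne
        · exact absurd rfl hxne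
    exact hNM (hrs hy1r) (hrs hy2r) (hrs hy3r) h12 h13 h23
      ⟨other _ f12 d12 _ f23 d23, other _ f23 d23 _ f13 d13⟩
  -- final counting
  rw [hsum]
  rcases Nat.lt_or_ge reps.card 3 with hm | hm3
  · -- two parts
    have hm2' : reps.card = 2 := by omega
    have : ∑ w ∈ reps, (A w).card ≤ reps.card * gRS (t - 1) := by
      rw [← smul_eq_mul]
      exact Finset.sum_le_card_nsmul reps _ _ (fun w hw => bnd1 hw)
    have h2g := gRS_double (t - 1)
    have : ∑ w ∈ reps, (A w).card ≤ 2 * gRS (t - 1) := by rw [hm2'] at this; omega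
    have heq : t - 1 + 1 = t := by omega
    rw [heq] at h2g
    omega
  · by_cases hone : ∃ w ∈ reps, onec w
    · obtain ⟨w0, hw0, hw0c⟩ := hone
      have hrest : ∀ w ∈ reps.erase w0, (A w).card ≤ gRS (t - 2) := by
        intro w hw
        refine bnd2 (mem_of_mem_erase hw) (fun hc => ?_)
        exact claim_one hm3 hw0 (mem_of_mem_erase hw) (mem_erase.mp hw).1.symm hw0c hc
      have hm3' : reps.card = 3 := by
        by_contra hm4
        exact claim_none (by omega) hw0 hw0c
      have hsplit : ∑ w ∈ reps.erase w0, (A w).card + (A w0).card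
          = ∑ w ∈ reps, (A w).card := Finset.sum_erase_add _ _ hw0
      have hsum2 : ∑ w ∈ reps.erase w0, (A w).card ≤ 2 * gRS (t - 2) := by
        have := Finset.sum_le_card_nsmul (reps.erase w0) _ _ hrest
        rw [card_erase_of_mem hw0, hm3'] at this
        simpa using this
      have ht2 : 2 ≤ t := by
        -- a non-one-colored rep exists and gives two colors in T
        obtain ⟨w1, hw1⟩ := htne hw0
        have hnoc : ¬ onec w1 := fun hc => claim_one hm3 hw0 (mem_of_mem_erase hw1)
          (mem_erase.mp hw1).1.symm hw0c hc
        simp only [honec] at hnoc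
        push_neg at hnoc
        obtain ⟨u1, hu1, u2, hu2, hneu⟩ := hnoc
        have := Finset.one_lt_card.mpr ⟨c w1 u1,
          hcT (mem_of_mem_erase hw1) (mem_of_mem_erase hu1)
            (fun h => (mem_erase.mp hu1).1 h.symm), c w1 u2,
          hcT (mem_of_mem_erase hw1) (mem_of_mem_erase hu2)
            (fun h => (mem_erase.mp hu2).1 h.symm), hneu⟩
        omega
      have hmix := gRS_mixed (t - 2)
      have e1 : t - 2 + 1 = t - 1 := by omega
      have e2 : t - 2 + 2 = t := by omega
      rw [e1, e2] at hmix
      have hb0 := bnd1 hw0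
      omega
    · push_neg at hone
      have hall : ∀ w ∈ reps, (A w).card ≤ gRS (t - 2) :=
        fun w hw => bnd2 hw (hone w hw)
      have hsum2 : ∑ w ∈ reps, (A w).card ≤ reps.card * gRS (t - 2) := by
        rw [← smul_eq_mul]
        exact Finset.sum_le_card_nsmul reps _ _ hall
      have ht2 : 2 ≤ t := by
        obtain ⟨w, hw⟩ := Finset.card_pos.mp (show 0 < reps.card by omega)
        have hnoc := hone w hw
        simp only [honec] at hnoc
        push_neg at hnoc
        obtain ⟨u1, hu1, u2, hu2, hneu⟩ := hnoc
        have := Finset.one_lt_card.mpr ⟨c w u1,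
          hcT hw (mem_of_mem_erase hu1) (fun h => (mem_erase.mp hu1).1 h.symm), c w u2,
          hcT hw (mem_of_mem_erase hu2) (fun h => (mem_erase.mp hu2).1 h.symm), hneu⟩
        omega
      have h5 := gRS_five (t - 2)
      have e2 : t - 2 + 2 = t := by omega
      rw [e2] at h5
      have : reps.card * gRS (t - 2) ≤ 5 * gRS (t - 2) :=
        Nat.mul_le_mul_right _ hm5
      omega

end Bound


section Construction

open Finset

/-- pentagon 2-coloring -/
def pent (x y : Fin 5) : Fin 2 := if x - y = 1 ∨ y - x = 1 then 0 else 1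

lemma pent_symm : ∀ x y : Fin 5, pent x y = pent y x := by decide

lemma pent_no_mono : ∀ x y z : Fin 5, x ≠ y → y ≠ z → x ≠ z →
    ¬(pent x y = pent y z ∧ pent y z = pent x z) := by decide

lemma fin2_pigeon : ∀ u v w : Fin 2, u = v ∨ u = w ∨ v = w := by decide

lemma fin2_pigeon' : ∀ u v w : Fin 2, u ≠ v → u ≠ w → v = w := by decide

variable {m : ℕ}

/-- least index where two distinct tuples differ -/
noncomputable def jdx (x y : Fin m → Fin 5) (h : x ≠ y) : Fin m := by
  refine (Finset.univ.filter fun i => x i ≠ y i).min' ?_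
  obtain ⟨i, hi⟩ := Function.ne_iff.mp h
  exact ⟨i, Finset.mem_filter.mpr ⟨Finset.mem_univ _, hi⟩⟩

lemma jdx_spec (x y : Fin m → Fin 5) (h : x ≠ y) :
    jdx x y h ∈ Finset.univ.filter fun i => x i ≠ y i := by
  unfold jdx
  exact Finset.min'_mem _ _

lemma jdx_ne (x y : Fin m → Fin 5) (h : x ≠ y) : x (jdx x y h) ≠ y (jdx x y h) :=
  (Finset.mem_filter.mp (jdx_spec x y h)).2

lemma jdx_min (x y : Fin m → Fin 5) (h : x ≠ y) :
    ∀ i, i < jdx x y h → x i = y i := by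
  intro i hi
  by_contra hne
  have hle : jdx x y h ≤ i := by
    unfold jdx
    exact Finset.min'_le _ i (Finset.mem_filter.mpr ⟨Finset.mem_univ _, hne⟩)
  exact absurd hi (not_lt.mpr hle)

lemma jdx_eq (x y : Fin m → Fin 5) (h : x ≠ y) (j : Fin m)
    (h1 : x j ≠ y j) (h2 : ∀ i, i < j → x i = y i) : jdx x y h = j := by
  apply le_antisymm
  · unfold jdx
    exact Finset.min'_le _ j (Finset.mem_filter.mpr ⟨Finset.mem_univ _, h1⟩)
  · by_contra hlt
    push_neg at hlt
    exact jdx_ne x y h (h2 _ hlt)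

lemma jdx_symm (x y : Fin m → Fin 5) (h : x ≠ y) (h' : y ≠ x) :
    jdx y x h' = jdx x y h :=
  jdx_eq y x h' _ (Ne.symm (jdx_ne x y h)) (fun i hi => (jdx_min x y h i hi).symm)

/-- the recursive even-case Gallai coloring -/
noncomputable def cev (x y : Fin m → Fin 5) : ℕ :=
  if h : x = y then 0
  else 2 * (jdx x y h : ℕ) + (pent (x (jdx x y h)) (y (jdx x y h)) : ℕ)

lemma cev_eval (x y : Fin m → Fin 5) (h : x ≠ y) :
    cev x y = 2 * (jdx x y h : ℕ) + (pent (x (jdx x y h)) (y (jdx x y h)) : ℕ) :=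
  dif_neg h

lemma cev_symm (x y : Fin m → Fin 5) : cev x y = cev y x := by
  by_cases h : x = y
  · rw [h]
  · rw [cev_eval x y h, cev_eval y x (Ne.symm h), jdx_symm x y h (Ne.symm h),
      pent_symm]

lemma cev_lt (x y : Fin m → Fin 5) (h : x ≠ y) : cev x y < 2 * m := by
  rw [cev_eval x y h]
  have h1 : (jdx x y h : ℕ) < m := (jdx x y h).isLt
  have h2 : (pent (x (jdx x y h)) (y (jdx x y h)) : ℕ) < 2 :=
    (pent _ _).isLt
  omega

lemma cev_good (x y z : Fin m → Fin 5) (hxy : x ≠ y) (hxz : x ≠ z) (hyz : y ≠ z) :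
    (cev x y = cev x z ∨ cev x y = cev y z ∨ cev x z = cev y z) ∧
    ¬(cev x y = cev y z ∧ cev y z = cev x z) := by
  set j1 := jdx x y hxy with hj1
  set j2 := jdx y z hyz with hj2
  rcases lt_trichotomy j1 j2 with h | h | h
  · -- j1 < j2 : x z differ first at j1, and c x y = c x z
    have hagree : z j1 = y j1 := (jdx_min y z hyz j1 h).symm
    have hj3 : jdx x z hxz = j1 := by
      apply jdx_eq
      · rw [hagree]; exact jdx_ne x y hxy
      · intro i hi
        rw [jdx_min x y hxy i hi]
        exact jdx_min y z hyz i (hi.trans h)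
    have e1 : cev x z = cev x y := by
      rw [cev_eval x z hxz, cev_eval x y hxy, hj3, ← hj1, hagree]
    have hord : cev x y < cev y z := by
      rw [cev_eval x y hxy, cev_eval y z hyz, ← hj1, ← hj2]
      have hlt : (j1 : ℕ) < (j2 : ℕ) := h
      have b1 : (pent (x j1) (y j1) : ℕ) < 2 := (pent _ _).isLt
      omega
    exact ⟨Or.inl e1.symm, fun ⟨h1, _⟩ => absurd h1 (Nat.ne_of_lt hord)⟩
  · -- j1 = j2
    by_cases hxzj : x j1 = z j1
    · -- x and z agree at j1 : c x y = c y z and j3 > j1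
      have e1 : cev x y = cev y z := by
        rw [cev_eval x y hxy, cev_eval y z hyz, ← hj1, ← hj2, ← h]
        congr 1
        rw [← hxzj, pent_symm]
      have hj3 : (j1 : ℕ) < (jdx x z hxz : ℕ) := by
        have hle : ∀ i, i ≤ j1 → x i = z i := by
          intro i hi
          rcases lt_or_eq_of_le hi with hi | hi
          · rw [jdx_min x y hxy i hi]
            exact jdx_min y z hyz i (by rw [← hj2, ← h]; exact hi)
          · subst hi; exact hxzj
        by_contra hcon
        push_neg at hcon
        have : (jdx x z hxz) ≤ j1 := hcon
        exact jdx_ne x z hxz (hle _ this)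
      have hord : cev y z < cev x z := by
        rw [cev_eval y z hyz, cev_eval x z hxz, ← hj2, ← h]
        have b1 : (pent (y j1) (z j1) : ℕ) < 2 := (pent _ _).isLt
        omega
      exact ⟨Or.inr (Or.inl e1), fun ⟨_, h2⟩ => absurd h2 (Nat.ne_of_lt hord)⟩
    · -- all three differ at j1 : reduce to the pentagon
      have hj3 : jdx x z hxz = j1 := by
        apply jdx_eq _ _ _ _ hxzj
        intro i hi
        rw [jdx_min x y hxy i hi]
        exact jdx_min y z hyz i (by rw [← hj2, ← h]; exact hi)
      have hyzj : y j1 ≠ z j1 := by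
        have h5 := jdx_ne y z hyz
        rwa [← hj2, ← h] at h5
      have hxyj : x j1 ≠ y j1 := jdx_ne x y hxy
      have exy : cev x y = 2 * (j1 : ℕ) + (pent (x j1) (y j1) : ℕ) :=
        cev_eval x y hxy
      have eyz : cev y z = 2 * (j1 : ℕ) + (pent (y j1) (z j1) : ℕ) := by
        rw [cev_eval y z hyz, ← hj2, ← h]
      have exz : cev x z = 2 * (j1 : ℕ) + (pent (x j1) (z j1) : ℕ) := by
        rw [cev_eval x z hxz, hj3]
      constructor
      · rcases fin2_pigeon (pent (x j1) (y j1)) (pent (x j1) (z j1))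
          (pent (y j1) (z j1)) with hp | hp | hp
        · left; rw [exy, exz, hp]
        · right; left; rw [exy, eyz, hp]
        · right; right; rw [exz, eyz, hp]
      · intro ⟨h1, h2⟩
        rw [exy, eyz] at h1
        rw [eyz, exz] at h2
        have p1 : pent (x j1) (y j1) = pent (y j1) (z j1) := Fin.ext (by omega)
        have p2 : pent (y j1) (z j1) = pent (x j1) (z j1) := Fin.ext (by omega)
        exact pent_no_mono (x j1) (y j1) (z j1) hxyj hyzj hxzj ⟨p1, p2⟩
  · -- j2 < j1 : symmetric to the first case
    have hagree : x j2 = y j2 := jdx_min x y hxy j2 h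
    have hj3 : jdx x z hxz = j2 := by
      apply jdx_eq
      · rw [hagree]; exact jdx_ne y z hyz
      · intro i hi
        rw [jdx_min x y hxy i (hi.trans h)]
        exact jdx_min y z hyz i hi
    have e1 : cev x z = cev y z := by
      rw [cev_eval x z hxz, cev_eval y z hyz, hj3, ← hj2, hagree]
    have hord : cev y z < cev x y := by
      rw [cev_eval x y hxy, cev_eval y z hyz, ← hj1, ← hj2]
      have hlt : (j2 : ℕ) < (j1 : ℕ) := h
      have b1 : (pent (y j2) (z j2) : ℕ) < 2 := (pent _ _).isLt
      omega
    refine ⟨Or.inr (Or.inr e1), fun ⟨h1, _⟩ => absurd h1.symm (Nat.ne_of_lt hord)⟩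

/-- abstract good colorings of the right size exist -/
lemma core_coloring (k : ℕ) (hk : 1 ≤ k) :
    ∃ (W : Type) (_ : Fintype W) (col : W → W → ℕ),
      Fintype.card W = gRS k ∧ (∀ x y, col x y = col y x) ∧
      (∀ x y z : W, x ≠ y → x ≠ z → y ≠ z →
        ((col x y = col x z ∨ col x y = col y z ∨ col x z = col y z) ∧
         ¬(col x y = col y z ∧ col y z = col x z))) ∧
      (∀ x y, col x y < k) := by
  classical
  rcases Nat.even_or_odd k with ⟨j, hj⟩ | ⟨j, hj⟩
  · -- even case
    have hk2 : k = 2 * j := by omega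
    refine ⟨Fin j → Fin 5, inferInstance, cev, ?_, cev_symm, ?_, ?_⟩
    · rw [Fintype.card_fun, Fintype.card_fin, Fintype.card_fin, hk2, gRS_even]
    · intro x y z hxy hxz hyz
      exact cev_good x y z hxy hxz hyz
    · intro x y
      by_cases h : x = y
      · rw [h]
        have : cev y y = 0 := dif_pos rfl
        omega
      · have := cev_lt x y h
        omega
  · -- odd case
    have hk2 : k = 2 * j + 1 := by omega
    refine ⟨Fin 2 × (Fin j → Fin 5), inferInstance,
      fun u w => if u.1 = w.1 then cev u.2 w.2 else 2 * j, ?_, ?_, ?_, ?_⟩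
    · rw [Fintype.card_prod, Fintype.card_fun, Fintype.card_fin, Fintype.card_fin,
        Fintype.card_fin, hk2, gRS_odd]
    · intro x y
      dsimp only
      by_cases h : x.1 = y.1
      · rw [if_pos h, if_pos h.symm, cev_symm]
      · rw [if_neg h, if_neg (Ne.symm h)]
    · rintro ⟨s1, x1⟩ ⟨s2, x2⟩ ⟨s3, x3⟩ h12 h13 h23
      dsimp only
      by_cases e12 : s1 = s2 <;> by_cases e13 : s1 = s3
      · -- all in the same half
        have e23 : s2 = s3 := e12.symm.trans e13
        rw [if_pos e12, if_pos e13, if_pos e23]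
        have hx12 : x1 ≠ x2 := fun h => h12 (Prod.ext_iff.mpr ⟨e12, h⟩)
        have hx13 : x1 ≠ x3 := fun h => h13 (Prod.ext_iff.mpr ⟨e13, h⟩)
        have hx23 : x2 ≠ x3 := fun h => h23 (Prod.ext_iff.mpr ⟨e23, h⟩)
        exact cev_good x1 x2 x3 hx12 hx13 hx23
      · -- s1 = s2 ≠ s3
        have e23 : s2 ≠ s3 := fun h => e13 (e12.trans h)
        have hx12 : x1 ≠ x2 := fun h => h12 (Prod.ext_iff.mpr ⟨e12, h⟩)
        rw [if_pos e12, if_neg e13, if_neg e23]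
        refine ⟨Or.inr (Or.inr rfl), fun ⟨h1, _⟩ => ?_⟩
        have := cev_lt x1 x2 hx12
        omega
      · -- s1 = s3 ≠ s2
        have e23 : s2 ≠ s3 := fun h => e12 (e13.trans h.symm)
        have hx13 : x1 ≠ x3 := fun h => h13 (Prod.ext_iff.mpr ⟨e13, h⟩)
        rw [if_neg e12, if_pos e13, if_neg e23]
        refine ⟨Or.inr (Or.inl rfl), fun ⟨_, h2⟩ => ?_⟩
        have := cev_lt x1 x3 hx13
        omega
      · -- s2 = s3 ≠ s1
        have e23 : s2 = s3 := fin2_pigeon' s1 s2 s3 e12 e13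
        have hx23 : x2 ≠ x3 := fun h => h23 (Prod.ext_iff.mpr ⟨e23, h⟩)
        rw [if_neg e12, if_neg e13, if_pos e23]
        refine ⟨Or.inl rfl, fun ⟨h1, _⟩ => ?_⟩
        have := cev_lt x2 x3 hx23
        omega
    · rintro ⟨s1, x1⟩ ⟨s2, x2⟩
      dsimp only
      by_cases h : s1 = s2
      · rw [if_pos h]
        by_cases h2 : x1 = x2
        · rw [h2]
          have : cev x2 x2 = 0 := dif_pos rfl
          omega
        · have := cev_lt x1 x2 h2
          omega
      · rw [if_neg h]
        omega

/-- a rainbow-free, mono-triangle-free `k`-coloring of `K_n` for `n ≤ gRS k`. -/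
lemma exists_good_coloring (k n : ℕ) (hk : 1 ≤ k) (hn : n ≤ gRS k) :
    ∃ c : Fin n → Fin n → Fin k, (∀ x y, c x y = c y x) ∧
      (∀ x y z : Fin n, x ≠ y → x ≠ z → y ≠ z →
        (c x y = c x z ∨ c x y = c y z ∨ c x z = c y z)) ∧
      (∀ x y z : Fin n, x ≠ y → x ≠ z → y ≠ z →
        ¬(c x y = c y z ∧ c y z = c x z)) := by
  classical
  obtain ⟨W, hWf, col, hcard, hsymc, hgood, hlt⟩ := core_coloring k hk
  have hemb : Nonempty (Fin n ↪ W) := by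
    apply Function.Embedding.nonempty_of_card_le
    rw [Fintype.card_fin, hcard]
    exact hn
  obtain ⟨e⟩ := hemb
  refine ⟨fun x y => ⟨col (e x) (e y), hlt _ _⟩, ?_, ?_, ?_⟩
  · intro x y
    exact Fin.ext (hsymc (e x) (e y))
  · intro x y z hxy hxz hyz
    have h := (hgood (e x) (e y) (e z) (fun h => hxy (e.injective h))
      (fun h => hxz (e.injective h)) (fun h => hyz (e.injective h))).1
    rcases h with h | h | h
    · exact Or.inl (Fin.ext h)
    · exact Or.inr (Or.inl (Fin.ext h))
    · exact Or.inr (Or.inr (Fin.ext h))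
  · intro x y z hxy hxz hyz hcc
    refine (hgood (e x) (e y) (e z) (fun h => hxy (e.injective h))
      (fun h => hxz (e.injective h)) (fun h => hyz (e.injective h))).2 ?_
    exact ⟨congrArg Fin.val hcc.1, congrArg Fin.val hcc.2⟩

end Construction


section Glue

lemma cycle_of_triangle {V C : Type*} {c : V → V → C} (hsym : Symm c) {x y z : V}
    (hxy : x ≠ y) (hxz : x ≠ z) (hyz : y ≠ z) (h1 : c x y = c y z)
    (h2 : c y z = c x z) : HasMonoCycle c 3 := by
  refine ⟨c x y, fun i => if i = 0 then x else if i = 1 then y else z, ?_, ?_⟩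
  · intro i j hij
    fin_cases i <;> fin_cases j <;>
      first
        | rfl
        | exact absurd hij hxy
        | exact absurd hij hxz
        | exact absurd hij hyz
        | exact absurd hij.symm hxy
        | exact absurd hij.symm hxz
        | exact absurd hij.symm hyz
  · intro i
    fin_cases i
    · rfl
    · exact h1.symm
    · show c z x = c x y
      rw [hsym z x]
      exact (h1.trans h2).symm

lemma triangle_of_cycle {V C : Type*} {c : V → V → C} (hsym : Symm c)
    (h : HasMonoCycle c 3) :
    ∃ x y z : V, x ≠ y ∧ x ≠ z ∧ y ≠ z ∧ c x y = c y z ∧ c y z = c x z := by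
  obtain ⟨col, v, hinj, hedge⟩ := h
  refine ⟨v 0, v 1, v 2, ?_, ?_, ?_, ?_, ?_⟩
  · exact fun hh => absurd (hinj hh) (by decide)
  · exact fun hh => absurd (hinj hh) (by decide)
  · exact fun hh => absurd (hinj hh) (by decide)
  · have e0 : c (v 0) (v 1) = col := hedge 0
    have e1 : c (v 1) (v 2) = col := hedge 1
    exact e0.trans e1.symm
  · have e1 : c (v 1) (v 2) = col := hedge 1
    have e2 : c (v 2) (v 0) = col := hedge 2
    exact e1.trans ((hsym (v 0) (v 2)).trans e2).symm

end Glue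

end GRK3

open GRK3

/-- Gallai–Ramsey number for triangles (Chung–Graham):
`gr_k(K₃, K₃) = 5^{k/2} + 1` for even `k` and `2·5^{(k-1)/2} + 1` for odd `k`. -/
theorem gallaiRamsey_K3 (k : ℕ) (hk : 1 ≤ k) :
    IsLeast {n : ℕ | 0 < n ∧ ∀ c : Fin n → Fin n → Fin k,
        (∀ x y, c x y = c y x) →
        HasRainbowTriangle c ∨ HasMonoCycle c 3}
      (if Even k then 5 ^ (k / 2) + 1 else 2 * 5 ^ ((k - 1) / 2) + 1) := by
  classical
  haveI : Nonempty (Fin k) := ⟨⟨0, hk⟩⟩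
  have hval : (if Even k then 5 ^ (k / 2) + 1 else 2 * 5 ^ ((k - 1) / 2) + 1)
      = gRS k + 1 := by
    unfold gRS
    split_ifs with h
    · rfl
    · have hodd : k % 2 = 1 := Nat.odd_iff.mp (Nat.not_even_iff_odd.mp h)
      have he : (k - 1) / 2 = k / 2 := by omega
      rw [he]
  rw [hval]
  constructor
  · -- membership
    refine ⟨Nat.succ_pos _, ?_⟩
    intro c hsymc
    by_contra hcon
    push_neg at hcon
    obtain ⟨hr, hm⟩ := hcon
    have hGal : GallaiOn (Finset.univ : Finset (Fin (gRS k + 1))) c := by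
      intro x _ y _ z _ hxy hxz hyz
      by_contra hcc
      push_neg at hcc
      exact hr ⟨x, y, z, hxy, hxz, hyz, hcc.1, hcc.2.1, hcc.2.2⟩
    have hNM : NoMonoOn (Finset.univ : Finset (Fin (gRS k + 1))) c := by
      intro x _ y _ z _ hxy hxz hyz hcc
      exact hm (cycle_of_triangle hsymc hxy hxz hyz hcc.1 hcc.2)
    have hb := gallai_bound k (Finset.univ : Finset (Fin k))
      (Finset.univ : Finset (Fin (gRS k + 1))) c
      (by rw [Finset.card_univ, Fintype.card_fin]) hsymc hGal hNM
      (fun x _ y _ _ => Finset.mem_univ _)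
    rw [Finset.card_univ, Fintype.card_fin] at hb
    omega
  · -- lower bound
    intro n hn
    by_contra hlt
    push_neg at hlt
    have hng : n ≤ gRS k := by omega
    obtain ⟨c, hsymc, hGal, hNM⟩ := exists_good_coloring k n hk hng
    rcases hn.2 c hsymc with hr | hm
    · obtain ⟨x, y, z, hxy, hxz, hyz, h1, h2, h3⟩ := hr
      rcases hGal x y z hxy hxz hyz with h | h | h
      · exact h1 h
      · exact h2 h
      · exact h3 h
    · obtain ⟨x, y, z, hxy, hxz, hyz, h1, h2⟩ := triangle_of_cycle hsymc hm
      exact hNM x y z hxy hxz hyz ⟨h1, h2⟩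
end

section
/- Let G be a complete graph with an edge-coloring c in which some fixed color (call it blue) admits no monochromatic cycle C_9 (i.e., G contains no cycle on 9 vertices all of whose edges are blue). Let S be a set of vertices of G and let u, v, w be three distinct vertices of G not in S such that every edge between {u, v, w} and S is colored blue. Then there exists a subset V_H ⊆ S with |V_H| ≤ 4 such that no edge of G with both endpoints in S \ V_H is colored blue. -/
/-- If a complete graph has no blue `C₉` and three distinct vertices `u, v, w`
outside a vertex set `S` are joined to all of `S` in blue, then deleting at
most four vertices of `S` destroys all blue edges inside `S`. -/
theorem blue_complete_three_vertices {V C : Type*} [DecidableEq V]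
    (c : V → V → C) (blue : C) (hsym : ∀ x y, c x y = c y x)
    (hblue : ¬ HasMonoCycleIn c 9 blue)
    (S : Finset V) (u v w : V)
    (huv : u ≠ v) (huw : u ≠ w) (hvw : v ≠ w)
    (hu : u ∉ S) (hv : v ∉ S) (hw : w ∉ S)
    (hcomp : ∀ x ∈ ({u, v, w} : Finset V), ∀ y ∈ S, c x y = blue) :
    ∃ T ⊆ S, T.card ≤ 4 ∧
      ∀ x ∈ S \ T, ∀ y ∈ S \ T, x ≠ y → c x y ≠ blue := by
  have hu' := hcomp u (by simp)
  have hv' := hcomp v (by simp)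
  have hw' := hcomp w (by simp)
  by_cases h1 : ∃ a ∈ S, ∃ b ∈ S, a ≠ b ∧ c a b = blue
  · obtain ⟨a, ha, b, hb, hab, hcab⟩ := h1
    by_cases h2 : ∃ d ∈ S \ {a, b}, ∃ e ∈ S \ {a, b}, d ≠ e ∧ c d e = blue
    · obtain ⟨d, hd, e, he, hde, hcde⟩ := h2
      simp only [Finset.mem_sdiff, Finset.mem_insert, Finset.mem_singleton, not_or] at hd he
      obtain ⟨hdS, hda, hdb⟩ := hd
      obtain ⟨heS, hea, heb⟩ := he
      by_cases h3 : ∃ f ∈ S \ {a, b, d, e}, ∃ g ∈ S \ {a, b, d, e}, f ≠ g ∧ c f g = blue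
      · exfalso
        obtain ⟨f, hf, g, hg, hfg, hcfg⟩ := h3
        simp only [Finset.mem_sdiff, Finset.mem_insert, Finset.mem_singleton, not_or] at hf hg
        obtain ⟨hfS, hfa, hfb, hfd, hfe⟩ := hf
        obtain ⟨hgS, hga, hgb, hgd, hge⟩ := hg
        apply hblue
        have hua : u ≠ a := fun h => hu (h ▸ ha)
        have hub : u ≠ b := fun h => hu (h ▸ hb)
        have hud : u ≠ d := fun h => hu (h ▸ hdS)
        have hue : u ≠ e := fun h => hu (h ▸ heS)
        have huf : u ≠ f := fun h => hu (h ▸ hfS)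
        have hug : u ≠ g := fun h => hu (h ▸ hgS)
        have hva : v ≠ a := fun h => hv (h ▸ ha)
        have hvb : v ≠ b := fun h => hv (h ▸ hb)
        have hvd : v ≠ d := fun h => hv (h ▸ hdS)
        have hve : v ≠ e := fun h => hv (h ▸ heS)
        have hvf : v ≠ f := fun h => hv (h ▸ hfS)
        have hvg : v ≠ g := fun h => hv (h ▸ hgS)
        have hwa : w ≠ a := fun h => hw (h ▸ ha)
        have hwb : w ≠ b := fun h => hw (h ▸ hb)
        have hwd : w ≠ d := fun h => hw (h ▸ hdS)
        have hwe : w ≠ e := fun h => hw (h ▸ heS)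
        have hwf : w ≠ f := fun h => hw (h ▸ hfS)
        have hwg : w ≠ g := fun h => hw (h ▸ hgS)
        refine ⟨([u, a, b, v, d, e, w, f, g] : List V).get,
          List.nodup_iff_injective_get.mp ?_, ?_⟩
        · simp only [List.nodup_cons, List.mem_cons, List.not_mem_nil, or_false,
            List.mem_singleton, not_or, List.nodup_nil, and_true]
          exact ⟨⟨hua, hub, huv, hud, hue, huw, huf, hug⟩,
            ⟨hab, hva.symm, Ne.symm hda, Ne.symm hea, hwa.symm, Ne.symm hfa, Ne.symm hga⟩,
            ⟨hvb.symm, Ne.symm hdb, Ne.symm heb, hwb.symm, Ne.symm hfb, Ne.symm hgb⟩,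
            ⟨hvd, hve, hvw, hvf, hvg⟩,
            ⟨hde, hwd.symm, Ne.symm hfd, Ne.symm hgd⟩,
            ⟨hwe.symm, Ne.symm hfe, Ne.symm hge⟩,
            ⟨hwf, hwg⟩, hfg, not_false⟩
        · intro i
          fin_cases i
          · exact hu' a ha
          · exact hcab
          · exact (hsym b v).trans (hv' b hb)
          · exact hv' d hdS
          · exact hcde
          · exact (hsym e w).trans (hw' e heS)
          · exact hw' f hfS
          · exact hcfg
          · exact (hsym g u).trans (hu' g hgS)
      · push_neg at h3
        refine ⟨{a, b, d, e}, ?_, ?_, ?_⟩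
        · intro x hx
          simp only [Finset.mem_insert, Finset.mem_singleton] at hx
          rcases hx with rfl | rfl | rfl | rfl
          exacts [ha, hb, hdS, heS]
        · have h1 := Finset.card_insert_le a ({b, d, e} : Finset V)
          have h2 := Finset.card_insert_le b ({d, e} : Finset V)
          have h3 := Finset.card_insert_le d ({e} : Finset V)
          have h4 : ({e} : Finset V).card = 1 := Finset.card_singleton e
          omega
        · intro x hx y hy hxy hcxy
          simp only [Finset.mem_sdiff, Finset.mem_insert, Finset.mem_singleton, not_or] at hx hy
          exact h3 x (by simp [Finset.mem_sdiff]; tauto) y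
            (by simp [Finset.mem_sdiff]; tauto) hxy hcxy
    · push_neg at h2
      refine ⟨{a, b}, ?_, ?_, ?_⟩
      · intro x hx
        simp only [Finset.mem_insert, Finset.mem_singleton] at hx
        rcases hx with rfl | rfl
        exacts [ha, hb]
      · have h1 := Finset.card_insert_le a ({b} : Finset V)
        have h2 : ({b} : Finset V).card = 1 := Finset.card_singleton b
        omega
      · intro x hx y hy hxy hcxy
        exact h2 x hx y hy hxy hcxy
  · push_neg at h1
    exact ⟨∅, Finset.empty_subset _, by simp, fun x hx y hy hxy hcxy =>
      h1 x (Finset.mem_sdiff.mp hx).1 y (Finset.mem_sdiff.mp hy).1 hxy hcxy⟩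
end

section
/- Let G be a complete graph with an edge-coloring c in which some fixed color (call it blue) admits no monochromatic cycle C_9 (i.e., G contains no cycle on 9 vertices all of whose edges are blue). Let Y and Z be disjoint sets of vertices of G with |Y| ≥ 4 and |Z| ≥ 5 such that every edge between Y and Z is colored blue. Then no edge of G with both endpoints in Z is colored blue. -/
/-- If a complete graph has no blue `C₉` and disjoint vertex sets `Y, Z` with
`|Y| ≥ 4` and `|Z| ≥ 5` are completely joined in blue, then there is no blue
edge inside `Z`. -/
theorem blue_complete_no_blue_edge_inside {V C : Type*} [DecidableEq V]
    (c : V → V → C) (blue : C) (hsym : ∀ x y, c x y = c y x)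
    (hblue : ¬ HasMonoCycleIn c 9 blue)
    (Y Z : Finset V) (hdisj : Disjoint Y Z)
    (hY : 4 ≤ Y.card) (hZ : 5 ≤ Z.card)
    (hcomp : ∀ y ∈ Y, ∀ z ∈ Z, c y z = blue) :
    ∀ x ∈ Z, ∀ y ∈ Z, x ≠ y → c x y ≠ blue := by

  intro x hx y hy hxy hbe
  apply hblue
  -- pick 4 distinct elements of Y
  obtain ⟨a, ha⟩ := Finset.card_pos.mp (by omega : 0 < Y.card)
  have h1 : 0 < (Y.erase a).card := by rw [Finset.card_erase_of_mem ha]; omega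
  obtain ⟨b, hb⟩ := Finset.card_pos.mp h1
  have h2 : 0 < ((Y.erase a).erase b).card := by
    rw [Finset.card_erase_of_mem hb, Finset.card_erase_of_mem ha]; omega
  obtain ⟨d, hd⟩ := Finset.card_pos.mp h2
  have h3 : 0 < (((Y.erase a).erase b).erase d).card := by
    rw [Finset.card_erase_of_mem hd, Finset.card_erase_of_mem hb,
      Finset.card_erase_of_mem ha]; omega
  obtain ⟨e, he⟩ := Finset.card_pos.mp h3
  -- distinctness in Y
  have hba : b ≠ a := Finset.ne_of_mem_erase hb
  have hdb : d ≠ b := Finset.ne_of_mem_erase hd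
  have hda : d ≠ a := Finset.ne_of_mem_erase (Finset.mem_of_mem_erase hd)
  have hed : e ≠ d := Finset.ne_of_mem_erase he
  have heb : e ≠ b := Finset.ne_of_mem_erase (Finset.mem_of_mem_erase he)
  have hea : e ≠ a := Finset.ne_of_mem_erase (Finset.mem_of_mem_erase (Finset.mem_of_mem_erase he))
  have hbY : b ∈ Y := Finset.mem_of_mem_erase hb
  have hdY : d ∈ Y := Finset.mem_of_mem_erase (Finset.mem_of_mem_erase hd)
  have heY : e ∈ Y := Finset.mem_of_mem_erase (Finset.mem_of_mem_erase (Finset.mem_of_mem_erase he))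
  -- pick 3 distinct elements of Z \ {x, y}
  have hz1' : 0 < ((Z.erase x).erase y).card := by
    rw [Finset.card_erase_of_mem (Finset.mem_erase.mpr ⟨Ne.symm hxy, hy⟩),
      Finset.card_erase_of_mem hx]; omega
  obtain ⟨z1, hz1⟩ := Finset.card_pos.mp hz1'
  have hz2' : 0 < (((Z.erase x).erase y).erase z1).card := by
    rw [Finset.card_erase_of_mem hz1,
      Finset.card_erase_of_mem (Finset.mem_erase.mpr ⟨Ne.symm hxy, hy⟩),
      Finset.card_erase_of_mem hx]; omega
  obtain ⟨z2, hz2⟩ := Finset.card_pos.mp hz2'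
  have hz3' : 0 < ((((Z.erase x).erase y).erase z1).erase z2).card := by
    rw [Finset.card_erase_of_mem hz2, Finset.card_erase_of_mem hz1,
      Finset.card_erase_of_mem (Finset.mem_erase.mpr ⟨Ne.symm hxy, hy⟩),
      Finset.card_erase_of_mem hx]; omega
  obtain ⟨z3, hz3⟩ := Finset.card_pos.mp hz3'
  have hz1y : z1 ≠ y := Finset.ne_of_mem_erase hz1
  have hz1x : z1 ≠ x := Finset.ne_of_mem_erase (Finset.mem_of_mem_erase hz1)
  have hz1Z : z1 ∈ Z := Finset.mem_of_mem_erase (Finset.mem_of_mem_erase hz1)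
  have hz21 : z2 ≠ z1 := Finset.ne_of_mem_erase hz2
  have hz2y : z2 ≠ y := Finset.ne_of_mem_erase (Finset.mem_of_mem_erase hz2)
  have hz2x : z2 ≠ x := Finset.ne_of_mem_erase (Finset.mem_of_mem_erase (Finset.mem_of_mem_erase hz2))
  have hz2Z : z2 ∈ Z := Finset.mem_of_mem_erase (Finset.mem_of_mem_erase (Finset.mem_of_mem_erase hz2))
  have hz32 : z3 ≠ z2 := Finset.ne_of_mem_erase hz3
  have hz31 : z3 ≠ z1 := Finset.ne_of_mem_erase (Finset.mem_of_mem_erase hz3)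
  have hz3y : z3 ≠ y := Finset.ne_of_mem_erase (Finset.mem_of_mem_erase (Finset.mem_of_mem_erase hz3))
  have hz3x : z3 ≠ x := Finset.ne_of_mem_erase (Finset.mem_of_mem_erase (Finset.mem_of_mem_erase (Finset.mem_of_mem_erase hz3)))
  have hz3Z : z3 ∈ Z := Finset.mem_of_mem_erase (Finset.mem_of_mem_erase (Finset.mem_of_mem_erase (Finset.mem_of_mem_erase hz3)))
  -- cross distinctness
  have hYZ : ∀ p ∈ Y, ∀ q ∈ Z, p ≠ q := fun p hp q hq hpq =>
    Finset.disjoint_left.mp hdisj hp (hpq ▸ hq)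
  have hax := hYZ a ha x hx; have hay := hYZ a ha y hy
  have haz1 := hYZ a ha z1 hz1Z; have haz2 := hYZ a ha z2 hz2Z; have haz3 := hYZ a ha z3 hz3Z
  have hbx := hYZ b hbY x hx; have hby := hYZ b hbY y hy
  have hbz1 := hYZ b hbY z1 hz1Z; have hbz2 := hYZ b hbY z2 hz2Z; have hbz3 := hYZ b hbY z3 hz3Z
  have hdx := hYZ d hdY x hx; have hdy := hYZ d hdY y hy
  have hdz1 := hYZ d hdY z1 hz1Z; have hdz2 := hYZ d hdY z2 hz2Z; have hdz3 := hYZ d hdY z3 hz3Z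
  have hex := hYZ e heY x hx; have hey := hYZ e heY y hy
  have hez1 := hYZ e heY z1 hz1Z; have hez2 := hYZ e heY z2 hz2Z; have hez3 := hYZ e heY z3 hz3Z
  refine ⟨fun i : Fin 9 => ([a, x, y, b, z1, d, z2, e, z3] : List V).get (Fin.cast rfl i),
    ?_, ?_⟩
  · have hnd : ([a, x, y, b, z1, d, z2, e, z3] : List V).Nodup := by
      simp only [List.nodup_cons, List.mem_cons, List.not_mem_nil, List.nodup_nil, or_false,
        not_or, and_true]
      repeat' constructor
      all_goals first
        | trivial
        | assumption
        | exact fun h => absurd h.symm (by assumption)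
    exact (List.nodup_iff_injective_get.mp hnd).comp fun i j h =>
      Fin.ext (by simpa using congrArg Fin.val h)
  · intro i
    fin_cases i
    · show c a x = blue; exact hcomp a ha x hx
    · show c x y = blue; exact hbe
    · show c y b = blue; rw [hsym]; exact hcomp b hbY y hy
    · show c b z1 = blue; exact hcomp b hbY z1 hz1Z
    · show c z1 d = blue; rw [hsym]; exact hcomp d hdY z1 hz1Z
    · show c d z2 = blue; exact hcomp d hdY z2 hz2Z
    · show c z2 e = blue; rw [hsym]; exact hcomp e heY z2 hz2Z
    · show c e z3 = blue; exact hcomp e heY z3 hz3Z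
    · show c z3 a = blue; rw [hsym]; exact hcomp a ha z3 hz3Z
end
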